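/- arXiv:1911.03396 — 5 statements merged into one kernel-verified Lean document; each statement's English description precedes it below -/
import Mathlib

section
/- Let W be a real random variable and γ a mean-zero function of W with finite variance, and suppose E[γ(W)φ(W)] = E[T₁ φ'(T₂)] for all suitable φ. Then for any differentiable g with Var[g(W)] finite, Var[g(W)] ≥ (E[T₁ g'(T₂)])² / Var[γ(W)]. -/
open MeasureTheory ProbabilityTheory
open scoped RealInnerProductSpace

lemma cs_integral {α : Type*} [MeasurableSpace α] (μ : Measure α) (f h : α → ℝ)
    (hf : MemLp f 2 μ) (hh : MemLp h 2 μ) :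
    (∫ x, f x * h x ∂μ) ^ 2 ≤ (∫ x, f x ^ 2 ∂μ) * (∫ x, h x ^ 2 ∂μ) := by
  set F : Lp ℝ 2 μ := hf.toLp f
  set H : Lp ℝ 2 μ := hh.toLp h
  have hF : ∀ᵐ x ∂μ, F x = f x := hf.coeFn_toLp
  have hH : ∀ᵐ x ∂μ, H x = h x := hh.coeFn_toLp
  have h1 : (⟪F, H⟫ : ℝ) = ∫ x, f x * h x ∂μ := by
    rw [L2.inner_def]
    refine integral_congr_ae ?_
    filter_upwards [hF, hH] with x h1 h2
    simp [h1, h2, RCLike.inner_apply, mul_comm]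
  have h2 : (⟪F, F⟫ : ℝ) = ∫ x, f x ^ 2 ∂μ := by
    rw [L2.inner_def]
    refine integral_congr_ae ?_
    filter_upwards [hF] with x h1
    simp [h1, RCLike.inner_apply, sq]
  have h3 : (⟪H, H⟫ : ℝ) = ∫ x, h x ^ 2 ∂μ := by
    rw [L2.inner_def]
    refine integral_congr_ae ?_
    filter_upwards [hH] with x h1
    simp [h1, RCLike.inner_apply, sq]
  have hcs : ⟪F, H⟫ ^ 2 ≤ ⟪F, F⟫ * ⟪H, H⟫ := by
    have := abs_real_inner_le_norm F H
    have hFn : ⟪F, F⟫ = ‖F‖ * ‖F‖ := real_inner_self_eq_norm_mul_norm F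
    have hHn : ⟪H, H⟫ = ‖H‖ * ‖H‖ := real_inner_self_eq_norm_mul_norm H
    nlinarith [abs_nonneg (⟪F, H⟫), le_abs_self (⟪F, H⟫), neg_abs_le (⟪F, H⟫), norm_nonneg F, norm_nonneg H]
  rw [h1, h2, h3] at hcs
  exact hcs

/-- General lower variance bound from a Stein coupling:
`Var[g(W)] ≥ (E[T₁ g'(T₂)])² / Var[γ(W)]`. -/
theorem stmt1 {Ω : Type*} [MeasureSpace Ω] [IsProbabilityMeasure (ℙ : Measure Ω)]
    (W T₁ T₂ : Ω → ℝ) (γ : ℝ → ℝ)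
    (hγ_mean : ∫ ω, γ (W ω) ∂ℙ = 0)
    (hγ_var : MemLp (fun ω => γ (W ω)) 2 ℙ)
    (hcoupling : ∀ φ : ℝ → ℝ, Differentiable ℝ φ →
      Integrable (fun ω => γ (W ω) * φ (W ω)) ℙ →
      Integrable (fun ω => T₁ ω * deriv φ (T₂ ω)) ℙ →
      ∫ ω, γ (W ω) * φ (W ω) ∂ℙ = ∫ ω, T₁ ω * deriv φ (T₂ ω) ∂ℙ)
    (g : ℝ → ℝ) (hg : Differentiable ℝ g)
    (hgW : MemLp (fun ω => g (W ω)) 2 ℙ)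
    (hgγ : Integrable (fun ω => γ (W ω) * g (W ω)) ℙ)
    (hInt : Integrable (fun ω => T₁ ω * deriv g (T₂ ω)) ℙ) :
    variance (fun ω => g (W ω)) ℙ ≥
      (∫ ω, T₁ ω * deriv g (T₂ ω) ∂ℙ) ^ 2 / variance (fun ω => γ (W ω)) ℙ := by
  set A : ℝ := ∫ ω, T₁ ω * deriv g (T₂ ω) ∂ℙ
  have hA : ∫ ω, γ (W ω) * g (W ω) ∂ℙ = A := hcoupling g hg hgγ hInt
  set c : ℝ := ∫ ω, g (W ω) ∂ℙ
  set h : Ω → ℝ := fun ω => g (W ω) - c with hh_def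
  have hh : MemLp h 2 ℙ := hgW.sub (memLp_const c)
  have hγint : Integrable (fun ω => γ (W ω)) ℙ := hγ_var.integrable one_le_two
  -- ∫ γ h = A
  have key : ∫ ω, γ (W ω) * h ω ∂ℙ = A := by
    have : ∀ ω, γ (W ω) * h ω = γ (W ω) * g (W ω) - γ (W ω) * c := by
      intro ω; simp [hh_def]; ring
    simp_rw [this]
    rw [integral_sub hgγ (hγint.mul_const c), integral_mul_const, hγ_mean, hA]
    ring
  -- Cauchy-Schwarz
  have hcs := cs_integral ℙ (fun ω => γ (W ω)) h hγ_var hh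
  rw [key] at hcs
  -- variances as second moments
  have hvγ : variance (fun ω => γ (W ω)) ℙ = ∫ ω, γ (W ω) ^ 2 ∂ℙ := by
    have := variance_eq_integral hγ_var.aestronglyMeasurable.aemeasurable
    simpa [hγ_mean] using this
  have hvg : variance (fun ω => g (W ω)) ℙ = ∫ ω, h ω ^ 2 ∂ℙ := by
    have := variance_eq_integral hgW.aestronglyMeasurable.aemeasurable
    simpa [hh_def] using this
  rw [hvγ, hvg]
  rcases lt_or_ge 0 (∫ ω, γ (W ω) ^ 2 ∂ℙ) with hpos | hle
  · rw [ge_iff_le, div_le_iff₀ hpos]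
    nlinarith [hcs]
  · have h0 : ∫ ω, γ (W ω) ^ 2 ∂ℙ = 0 :=
      le_antisymm hle (integral_nonneg fun ω => sq_nonneg _)
    rw [h0, div_zero]
    exact integral_nonneg fun ω => sq_nonneg _
end

section
/- A Pearson-type random variable with mean μ, whose density p satisfies p'(x)/p(x) = −((2δ₁+1)(x−μ) + δ₂)/(δ₁(x−μ)² + δ₂(x−μ) + δ₃), has Stein kernel τ(x) = δ₁(x−μ)² + δ₂(x−μ) + δ₃; that is, E[(X−μ)φ(X)] = E[τ(X)φ'(X)] for all suitable φ. -/
open MeasureTheory ProbabilityTheory Set Filter Topology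

private lemma pearson_not_int_top {d c : ℝ} {f : ℝ → ℝ} (hd : 0 < d)
    (hf : IntegrableOn f (Ioi c)) (hbound : ∀ᶠ x in atTop, d * |x|⁻¹ ≤ |f x|) : False := by
  obtain ⟨M, hM⟩ := eventually_atTop.mp hbound
  have hinv : IntegrableOn (fun x : ℝ => x⁻¹) (Ioi (max c M)) := by
    apply Integrable.mono'
      (((hf.mono_set (Ioi_subset_Ioi (le_max_left c M))).norm.const_mul d⁻¹))
      measurable_inv.aestronglyMeasurable
    rw [ae_restrict_iff' measurableSet_Ioi]
    filter_upwards with x hx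
    have hxM : M ≤ x := (le_max_right c M).trans (le_of_lt hx)
    have h1 := hM x hxM
    have h2 : |x|⁻¹ ≤ d⁻¹ * |f x| := by
      have := mul_le_mul_of_nonneg_left h1 (le_of_lt (inv_pos.mpr hd))
      calc |x|⁻¹ = d⁻¹ * (d * |x|⁻¹) := by field_simp
        _ ≤ d⁻¹ * |f x| := this
    simpa [norm_inv, Real.norm_eq_abs] using h2
  exact not_IntegrableOn_Ioi_inv hinv

private lemma pearson_not_int_bot {d c : ℝ} {f : ℝ → ℝ} (hd : 0 < d)
    (hf : IntegrableOn f (Iio c)) (hbound : ∀ᶠ x in atBot, d * |x|⁻¹ ≤ |f x|) : False := by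
  have h1 : IntegrableOn (fun x => f (-x)) (Ioi (-c)) := by
    have h2 := (Measure.measurePreserving_neg (volume : Measure ℝ)).integrableOn_comp_preimage
      (Homeomorph.neg ℝ).measurableEmbedding (f := f) (s := Iio c)
    simp only [Homeomorph.neg, Function.comp_def, Equiv.neg, Equiv.coe_fn_mk,
      Homeomorph.homeomorph_mk_coe, neg_preimage, neg_Iio] at h2
    exact h2.mpr hf
  apply pearson_not_int_top hd h1
  obtain ⟨M, hM⟩ := eventually_atBot.mp hbound
  filter_upwards [eventually_ge_atTop (-M)] with x hx
  have := hM (-x) (by linarith)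
  simpa [abs_neg] using this

private lemma pearson_lim_top {p φ : ℝ → ℝ} {μ δ₁ δ₂ δ₃ a L : ℝ}
    (hτpos : ∀ x ∈ Ioi a, 0 < δ₁ * (x - μ) ^ 2 + δ₂ * (x - μ) + δ₃)
    (hint : IntegrableOn (fun x => p x * ((x - μ) * φ x)) (Ioi a))
    (hL : Tendsto (fun x => (δ₁ * (x - μ) ^ 2 + δ₂ * (x - μ) + δ₃) * p x * φ x) atTop (𝓝 L)) :
    L = 0 := by
  by_contra hL0
  have habs : 0 < |L| := abs_pos.mpr hL0
  set C := 4 * |δ₁| + 2 * |δ₂| + |δ₃| + 1 with hC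
  have hCpos : 0 < C := by positivity
  clear_value C
  refine pearson_not_int_top (d := |L| / (4 * C)) (div_pos habs (by linarith)) hint ?_
  have hev1 : ∀ᶠ x in atTop,
      |L| / 2 < |(δ₁ * (x - μ) ^ 2 + δ₂ * (x - μ) + δ₃) * p x * φ x| :=
    hL.abs.eventually (eventually_gt_nhds (by linarith))
  filter_upwards [hev1, eventually_gt_atTop a, eventually_ge_atTop (1 : ℝ),
    eventually_ge_atTop (2 * |μ|)] with x h1 h2 h3 h4
  have htpos : 0 < δ₁ * (x - μ) ^ 2 + δ₂ * (x - μ) + δ₃ := hτpos x h2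
  have hx0 : (0 : ℝ) < x := by linarith
  have hu_lb : x / 2 ≤ x - μ := by have := le_abs_self μ; linarith
  have hu_ub : x - μ ≤ 2 * x := by have := neg_le_abs μ; linarith
  have hupos : 0 < x - μ := by linarith
  have htub : δ₁ * (x - μ) ^ 2 + δ₂ * (x - μ) + δ₃ ≤ C * x ^ 2 := by
    have h5 : (x - μ) ^ 2 ≤ 4 * x ^ 2 := by nlinarith
    have h6 : δ₁ * (x - μ) ^ 2 ≤ |δ₁| * (4 * x ^ 2) := by
      nlinarith [le_abs_self δ₁, abs_nonneg δ₁, sq_nonneg (x - μ)]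
    have h7 : δ₂ * (x - μ) ≤ |δ₂| * (2 * x) := by
      nlinarith [le_abs_self δ₂, abs_nonneg δ₂]
    have h8 : δ₃ ≤ |δ₃| := le_abs_self δ₃
    nlinarith [abs_nonneg δ₁, abs_nonneg δ₂, abs_nonneg δ₃,
      mul_nonneg (abs_nonneg δ₂) (show (0:ℝ) ≤ x ^ 2 - x by nlinarith),
      mul_nonneg (abs_nonneg δ₃) (show (0:ℝ) ≤ x ^ 2 - 1 by nlinarith)]
  have key : p x * ((x - μ) * φ x) =
      (x - μ) * ((δ₁ * (x - μ) ^ 2 + δ₂ * (x - μ) + δ₃) * p x * φ x) /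
        (δ₁ * (x - μ) ^ 2 + δ₂ * (x - μ) + δ₃) := by
    rw [eq_div_iff htpos.ne']
    ring
  rw [key, abs_div, abs_of_pos htpos, abs_mul, abs_of_pos hupos, abs_of_pos hx0]
  have h9 : |L| / (4 * C) * x⁻¹ = x / 2 * (|L| / 2) / (C * x ^ 2) := by
    field_simp
    ring
  rw [h9]
  refine div_le_div₀ (mul_nonneg (by linarith : (0:ℝ) ≤ x - μ) (abs_nonneg _)) ?_ htpos htub
  apply mul_le_mul hu_lb h1.le (by positivity) (by linarith)

private lemma pearson_lim_bot {p φ : ℝ → ℝ} {μ δ₁ δ₂ δ₃ b L : ℝ}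
    (hτpos : ∀ x ∈ Iio b, 0 < δ₁ * (x - μ) ^ 2 + δ₂ * (x - μ) + δ₃)
    (hint : IntegrableOn (fun x => p x * ((x - μ) * φ x)) (Iio b))
    (hL : Tendsto (fun x => (δ₁ * (x - μ) ^ 2 + δ₂ * (x - μ) + δ₃) * p x * φ x) atBot (𝓝 L)) :
    L = 0 := by
  by_contra hL0
  have habs : 0 < |L| := abs_pos.mpr hL0
  set C := 4 * |δ₁| + 2 * |δ₂| + |δ₃| + 1 with hC
  have hCpos : 0 < C := by positivity
  clear_value C
  refine pearson_not_int_bot (d := |L| / (4 * C)) (div_pos habs (by linarith)) hint ?_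
  have hev1 : ∀ᶠ x in atBot,
      |L| / 2 < |(δ₁ * (x - μ) ^ 2 + δ₂ * (x - μ) + δ₃) * p x * φ x| :=
    hL.abs.eventually (eventually_gt_nhds (by linarith))
  filter_upwards [hev1, eventually_lt_atBot b, eventually_le_atBot (-1 : ℝ),
    eventually_le_atBot (-(2 * |μ|))] with x h1 h2 h3 h4
  have htpos : 0 < δ₁ * (x - μ) ^ 2 + δ₂ * (x - μ) + δ₃ := hτpos x h2
  have hx0 : x < 0 := by linarith
  have hu_ub : x - μ ≤ x / 2 := by have := neg_le_abs μ; linarith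
  have hu_lb : 2 * x ≤ x - μ := by have := le_abs_self μ; linarith
  have huneg : x - μ < 0 := by linarith
  have htub : δ₁ * (x - μ) ^ 2 + δ₂ * (x - μ) + δ₃ ≤ C * x ^ 2 := by
    have h5 : (x - μ) ^ 2 ≤ 4 * x ^ 2 := by nlinarith
    have h6 : δ₁ * (x - μ) ^ 2 ≤ |δ₁| * (4 * x ^ 2) := by
      nlinarith [le_abs_self δ₁, abs_nonneg δ₁, sq_nonneg (x - μ)]
    have h7 : δ₂ * (x - μ) ≤ |δ₂| * (2 * (-x)) := by
      nlinarith [mul_nonneg (show (0:ℝ) ≤ |δ₂| + δ₂ by nlinarith [neg_abs_le δ₂])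
          (show (0:ℝ) ≤ -(x - μ) by linarith),
        mul_le_mul_of_nonneg_left (show -(x - μ) ≤ -(2 * x) by linarith) (abs_nonneg δ₂)]
    have h8 : δ₃ ≤ |δ₃| := le_abs_self δ₃
    nlinarith [abs_nonneg δ₁, abs_nonneg δ₂, abs_nonneg δ₃,
      mul_nonneg (abs_nonneg δ₂) (show (0:ℝ) ≤ x ^ 2 - 2 * (-x) + 1 by nlinarith),
      mul_nonneg (abs_nonneg δ₂) (show (0:ℝ) ≤ x ^ 2 + x by nlinarith),
      mul_nonneg (abs_nonneg δ₃) (show (0:ℝ) ≤ x ^ 2 - 1 by nlinarith)]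
  have key : p x * ((x - μ) * φ x) =
      (x - μ) * ((δ₁ * (x - μ) ^ 2 + δ₂ * (x - μ) + δ₃) * p x * φ x) /
        (δ₁ * (x - μ) ^ 2 + δ₂ * (x - μ) + δ₃) := by
    rw [eq_div_iff htpos.ne']
    ring
  rw [key, abs_div, abs_of_pos htpos, abs_mul, abs_of_neg huneg, abs_of_neg hx0]
  have h9 : |L| / (4 * C) * (-x)⁻¹ = -x / 2 * (|L| / 2) / (C * x ^ 2) := by
    have hxne : x ≠ 0 := by linarith
    have hCne : C ≠ 0 := ne_of_gt hCpos
    field_simp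
    ring
  rw [h9]
  refine div_le_div₀ (mul_nonneg (by linarith : (0:ℝ) ≤ -(x - μ)) (abs_nonneg _)) ?_ htpos htub
  apply mul_le_mul (by linarith) h1.le (by positivity) (by linarith)

private lemma pearson_open_ordConnected_cases {s : Set ℝ} (ho : IsOpen s)
    (hc : s.OrdConnected) :
    s = ∅ ∨ s = univ ∨ (∃ a, s = Ioi a) ∨ (∃ b, s = Iio b) ∨
      (∃ a b, a < b ∧ s = Ioo a b) := by
  rcases s.eq_empty_or_nonempty with h | hne
  · exact Or.inl h
  right
  have key_lt : ∀ x ∈ s, BddBelow s → sInf s < x := by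
    intro x hx hb
    obtain ⟨ε, εpos, hball⟩ := Metric.isOpen_iff.mp ho x hx
    have hmem : x - ε / 2 ∈ s := by
      apply hball
      rw [Real.ball_eq_Ioo]
      exact ⟨by linarith, by linarith⟩
    have := csInf_le hb hmem
    linarith
  have key_gt : ∀ x ∈ s, BddAbove s → x < sSup s := by
    intro x hx hb
    obtain ⟨ε, εpos, hball⟩ := Metric.isOpen_iff.mp ho x hx
    have hmem : x + ε / 2 ∈ s := by
      apply hball
      rw [Real.ball_eq_Ioo]
      exact ⟨by linarith, by linarith⟩
    have := le_csSup hb hmem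
    linarith
  by_cases hbb : BddBelow s <;> by_cases hba : BddAbove s
  · right; right; right
    obtain ⟨x₀, hx₀⟩ := id hne
    refine ⟨sInf s, sSup s, lt_trans (key_lt x₀ hx₀ hbb) (key_gt x₀ hx₀ hba), ?_⟩
    ext x
    constructor
    · intro hx
      exact ⟨key_lt x hx hbb, key_gt x hx hba⟩
    · rintro ⟨hl, hr⟩
      obtain ⟨y, hy, hyx⟩ := exists_lt_of_csInf_lt hne hl
      obtain ⟨z, hz, hxz⟩ := exists_lt_of_lt_csSup hne hr
      exact hc.out hy hz ⟨hyx.le, hxz.le⟩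
  · right; left
    refine ⟨sInf s, ?_⟩
    ext x
    constructor
    · intro hx
      exact key_lt x hx hbb
    · intro hl
      obtain ⟨y, hy, hyx⟩ := exists_lt_of_csInf_lt hne hl
      obtain ⟨z, hz, hxz⟩ := (not_bddAbove_iff.mp hba) x
      exact hc.out hy hz ⟨hyx.le, hxz.le⟩
  · right; right; left
    refine ⟨sSup s, ?_⟩
    ext x
    constructor
    · intro hx
      exact key_gt x hx hba
    · intro hr
      obtain ⟨y, hy, hyx⟩ := (not_bddBelow_iff.mp hbb) x
      obtain ⟨z, hz, hxz⟩ := exists_lt_of_lt_csSup hne hr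
      exact hc.out hy hz ⟨hyx.le, hxz.le⟩
  · left
    apply eq_univ_of_forall
    intro x
    obtain ⟨y, hy, hyx⟩ := (not_bddBelow_iff.mp hbb) x
    obtain ⟨z, hz, hxz⟩ := (not_bddAbove_iff.mp hba) x
    exact hc.out hy hz ⟨hyx.le, hxz.le⟩

/-- Pearson family: if the density `p` of `X` satisfies
`p'(x)/p(x) = −((2δ₁+1)(x−μ) + δ₂)/(δ₁(x−μ)² + δ₂(x−μ) + δ₃)` on its interval support,
then `τ(x) = δ₁(x−μ)² + δ₂(x−μ) + δ₃` is a Stein kernel for `X`. -/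
theorem stmt11 {Ω : Type*} [MeasureSpace Ω] [IsProbabilityMeasure (ℙ : Measure Ω)]
    (X : Ω → ℝ) (hXmeas : Measurable X) (p : ℝ → ℝ) (s : Set ℝ)
    (hdensity : Measure.map X ℙ = volume.withDensity fun x => ENNReal.ofReal (p x))
    (hp_diff : Differentiable ℝ p)
    (hs : s.OrdConnected) (hsupp : ∀ x, 0 < p x ↔ x ∈ s)
    (μ : ℝ) (hmean : ∫ ω, X ω ∂ℙ = μ) (hL2 : MemLp X 2 ℙ)
    (δ₁ δ₂ δ₃ : ℝ) (hδ : ¬(δ₁ = 0 ∧ δ₂ = 0 ∧ δ₃ = 0))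
    (hquad_pos : ∀ x ∈ s, 0 < δ₁ * (x - μ) ^ 2 + δ₂ * (x - μ) + δ₃)
    (hpearson : ∀ x ∈ s, deriv p x / p x =
      -((2 * δ₁ + 1) * (x - μ) + δ₂) / (δ₁ * (x - μ) ^ 2 + δ₂ * (x - μ) + δ₃)) :
    ∀ φ : ℝ → ℝ, Differentiable ℝ φ →
      Integrable (fun ω => (X ω - μ) * φ (X ω)) ℙ →
      Integrable (fun ω =>
        (δ₁ * (X ω - μ) ^ 2 + δ₂ * (X ω - μ) + δ₃) * deriv φ (X ω)) ℙ →
      ∫ ω, (X ω - μ) * φ (X ω) ∂ℙ =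
        ∫ ω, (δ₁ * (X ω - μ) ^ 2 + δ₂ * (X ω - μ) + δ₃) * deriv φ (X ω) ∂ℙ := by
  intro φ hφ hint1 hint2
  have hp_cont : Continuous p := hp_diff.continuous
  have hφ_cont : Continuous φ := hφ.continuous
  -- the support is open
  have hs_open : IsOpen s := by
    have : s = p ⁻¹' (Ioi 0) := by
      ext x
      simp [mem_preimage, mem_Ioi, (hsupp x).symm]
    rw [this]
    exact isOpen_Ioi.preimage hp_cont
  have hsm : MeasurableSet s := hs_open.measurableSet
  -- abbreviations
  set τ : ℝ → ℝ := fun x => δ₁ * (x - μ) ^ 2 + δ₂ * (x - μ) + δ₃ with hτdef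
  set f₁ : ℝ → ℝ := fun x => (x - μ) * φ x with hf₁def
  set f₂ : ℝ → ℝ := fun x => τ x * deriv φ x with hf₂def
  have hτ_cont : Continuous τ := by
    rw [hτdef]; continuity
  have hf₁_meas : Measurable f₁ := by
    rw [hf₁def]
    exact ((measurable_id.sub measurable_const).mul hφ_cont.measurable)
  have hf₂_meas : Measurable f₂ := by
    rw [hf₂def]
    exact hτ_cont.measurable.mul (measurable_deriv φ)
  have hq_meas : Measurable fun x => (p x).toNNReal :=
    measurable_real_toNNReal.comp hp_cont.measurable
  -- transfer of integrals to Lebesgue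
  have transfer : ∀ F : ℝ → ℝ, Measurable F →
      ∫ ω, F (X ω) ∂ℙ = ∫ x, max (p x) 0 * F x := by
    intro F hF
    rw [← integral_map hXmeas.aemeasurable hF.aestronglyMeasurable, hdensity,
      show (fun x => ENNReal.ofReal (p x)) = (fun x => ((p x).toNNReal : ENNReal)) from rfl,
      integral_withDensity_eq_integral_smul hq_meas]
    refine integral_congr_ae (Filter.Eventually.of_forall fun x => ?_)
    simp only [NNReal.smul_def, Real.coe_toNNReal', smul_eq_mul]
  have transferInt : ∀ F : ℝ → ℝ, Measurable F → Integrable (fun ω => F (X ω)) ℙ →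
      Integrable (fun x => max (p x) 0 * F x) volume := by
    intro F hF hFi
    have h1 : Integrable F (Measure.map X ℙ) :=
      (integrable_map_measure hF.aestronglyMeasurable hXmeas.aemeasurable).mpr hFi
    rw [hdensity,
      show (fun x => ENNReal.ofReal (p x)) = (fun x => ((p x).toNNReal : ENNReal)) from rfl,
      integrable_withDensity_iff_integrable_smul hq_meas] at h1
    have he : (fun x => (p x).toNNReal • F x) = fun x => max (p x) 0 * F x := by
      funext x
      simp only [NNReal.smul_def, Real.coe_toNNReal', smul_eq_mul]
    rwa [he] at h1
  -- indicator description
  have hind : ∀ F : ℝ → ℝ,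
      (fun x => max (p x) 0 * F x) = s.indicator (fun x => p x * F x) := by
    intro F
    funext x
    by_cases hx : x ∈ s
    · rw [indicator_of_mem hx, max_eq_left ((hsupp x).mpr hx).le]
    · rw [indicator_of_notMem hx,
        max_eq_right (not_lt.mp fun h => hx ((hsupp x).mp h)), zero_mul]
  -- integrability on s
  have hq1 : Integrable (fun x => max (p x) 0 * f₁ x) volume := transferInt f₁ hf₁_meas hint1
  have hq2 : Integrable (fun x => max (p x) 0 * f₂ x) volume := transferInt f₂ hf₂_meas hint2
  rw [hind f₁] at hq1
  rw [hind f₂] at hq2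
  have hint1' : IntegrableOn (fun x => p x * f₁ x) s volume :=
    (integrable_indicator_iff hsm).mp hq1
  have hint2' : IntegrableOn (fun x => p x * f₂ x) s volume :=
    (integrable_indicator_iff hsm).mp hq2
  -- the function h and its derivative D on s
  set h : ℝ → ℝ := fun y => τ y * p y * φ y with hhdef
  set D : ℝ → ℝ := fun x => p x * f₂ x - p x * f₁ x with hDdef
  have hDint : IntegrableOn D s volume := hint2'.sub hint1'
  have hcont_h : Continuous h := (hτ_cont.mul hp_cont).mul hφ_cont
  have hτd : ∀ x : ℝ, HasDerivAt τ (2 * δ₁ * (x - μ) + δ₂) x := by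
    intro x
    have h1 : HasDerivAt (fun y : ℝ => y - μ) 1 x := (hasDerivAt_id x).sub_const μ
    have h2 := h1.pow 2
    have h3 := ((h2.const_mul δ₁).add (h1.const_mul δ₂)).add_const δ₃
    refine h3.congr_deriv ?_
    push_cast
    ring
  have hds : ∀ x ∈ s, HasDerivAt h (D x) x := by
    intro x hx
    have hpx : 0 < p x := (hsupp x).mpr hx
    have htx : 0 < τ x := hquad_pos x hx
    have hp' : HasDerivAt p (deriv p x) x := (hp_diff x).hasDerivAt
    have hφ' : HasDerivAt φ (deriv φ x) x := (hφ x).hasDerivAt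
    have hprod := ((hτd x).mul hp').mul hφ'
    have hpe : deriv p x =
        -((2 * δ₁ + 1) * (x - μ) + δ₂) / (δ₁ * (x - μ) ^ 2 + δ₂ * (x - μ) + δ₃) * p x :=
      (div_eq_iff (ne_of_gt hpx)).mp (hpearson x hx)
    rw [hhdef]
    refine hprod.congr_deriv ?_
    rw [hDdef, hf₂def, hf₁def, hpe, hτdef]
    have hτne : δ₁ * (x - μ) ^ 2 + δ₂ * (x - μ) + δ₃ ≠ 0 := ne_of_gt htx
    simp only [Pi.mul_apply]
    rw [div_mul_eq_mul_div, mul_div_assoc', mul_div_cancel_left₀ _ hτne]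
    ring
  -- vanishing of p at finite boundary points
  have pzero_right : ∀ c b : ℝ, c < b → Ioo c b ⊆ s → c ∉ s → p c = 0 := by
    intro c b hcb hsub hcs
    have h2 : ¬0 < p c := fun hgt => hcs ((hsupp c).mp hgt)
    have h3 : 0 ≤ p c := by
      have ht : Tendsto p (𝓝[>] c) (𝓝 (p c)) := hp_cont.continuousAt.continuousWithinAt
      refine ge_of_tendsto ht ?_
      filter_upwards [Ioo_mem_nhdsGT_of_mem ⟨le_refl c, hcb⟩] with y hy
      exact ((hsupp y).mpr (hsub hy)).le
    linarith [not_lt.mp h2]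
  have pzero_left : ∀ a c : ℝ, a < c → Ioo a c ⊆ s → c ∉ s → p c = 0 := by
    intro a c hac hsub hcs
    have h2 : ¬0 < p c := fun hgt => hcs ((hsupp c).mp hgt)
    have h3 : 0 ≤ p c := by
      have ht : Tendsto p (𝓝[<] c) (𝓝 (p c)) := hp_cont.continuousAt.continuousWithinAt
      refine ge_of_tendsto ht ?_
      filter_upwards [Ioo_mem_nhdsLT_of_mem ⟨hac, le_refl c⟩] with y hy
      exact ((hsupp y).mpr (hsub hy)).le
    linarith [not_lt.mp h2]
  -- the key identity : ∫ D over s = 0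
  have hmain : ∫ x in s, D x = 0 := by
    rcases pearson_open_ordConnected_cases hs_open hs with hcase | hcase | hcase | hcase | hcase
    · rw [hcase]
      simp
    · -- s = univ
      have hDint_univ : Integrable D volume := by
        rw [← integrableOn_univ, ← hcase]
        exact hDint
      have hderiv_all : ∀ x : ℝ, HasDerivAt h (D x) x := fun x =>
        hds x (hcase ▸ mem_univ x)
      have hlimtop := tendsto_limUnder_of_hasDerivAt_of_integrableOn_Ioi (a := 0)
        (fun x _ => hderiv_all x) hDint_univ.integrableOn
      have hlimbot := tendsto_limUnder_of_hasDerivAt_of_integrableOn_Iic (a := 0)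
        (fun x _ => hderiv_all x) hDint_univ.integrableOn
      have htop0 : limUnder atTop h = 0 := by
        apply pearson_lim_top (a := 0) (p := p) (φ := φ)
          (fun x _ => hquad_pos x (hcase ▸ mem_univ x))
          ((hcase ▸ hint1').mono_set (subset_univ _))
        exact hlimtop
      have hbot0 : limUnder atBot h = 0 := by
        apply pearson_lim_bot (b := 0) (p := p) (φ := φ)
          (fun x _ => hquad_pos x (hcase ▸ mem_univ x))
          ((hcase ▸ hint1').mono_set (subset_univ _))
        exact hlimbot
      rw [hcase, Measure.restrict_univ]
      rw [integral_of_hasDerivAt_of_tendsto hderiv_all hDint_univ hlimbot hlimtop,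
        htop0, hbot0, sub_zero]
    · -- s = Ioi a
      obtain ⟨a, rfl⟩ := hcase
      have hderiv' : ∀ x ∈ Ioi a, HasDerivAt h (D x) x := hds
      have hlimtop := tendsto_limUnder_of_hasDerivAt_of_integrableOn_Ioi hderiv' hDint
      have htop0 : limUnder atTop h = 0 :=
        pearson_lim_top hquad_pos hint1' hlimtop
      have hpa : p a = 0 :=
        pzero_right a (a + 1) (by linarith) (fun y hy => hy.1) (by simp)
      have := integral_Ioi_of_hasDerivAt_of_tendsto hcont_h.continuousWithinAt
        hderiv' hDint hlimtop
      rw [this, htop0, hhdef]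
      simp [hpa]
    · -- s = Iio b
      obtain ⟨b, rfl⟩ := hcase
      have hderiv' : ∀ x ∈ Iio b, HasDerivAt h (D x) x := hds
      have hblt : b - 1 < b := by linarith
      have hsub1 : Iic (b - 1) ⊆ Iio b := fun x hx => lt_of_le_of_lt hx hblt
      have hlimbot := tendsto_limUnder_of_hasDerivAt_of_integrableOn_Iic (a := b - 1)
        (fun x hx => hderiv' x (hsub1 hx)) (hDint.mono_set hsub1)
      have hbot0 : limUnder atBot h = 0 :=
        pearson_lim_bot hquad_pos hint1' hlimbot
      have hpb : p b = 0 :=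
        pzero_left (b - 1) b (by linarith) (fun y hy => hy.2) (by simp)
      have heq := integral_Iic_of_hasDerivAt_of_tendsto (a := b)
        hcont_h.continuousWithinAt hderiv'
        ((integrableOn_Iic_iff_integrableOn_Iio).mpr hDint) hlimbot
      rw [← integral_Iic_eq_integral_Iio, heq, hbot0, hhdef]
      simp [hpb]
    · -- s = Ioo a b
      obtain ⟨a, b, hab, rfl⟩ := hcase
      have hpa : p a = 0 :=
        pzero_right a b hab (fun y hy => hy) (by simp)
      have hpb : p b = 0 :=
        pzero_left a b hab (fun y hy => hy) (by simp)
      have hII : IntervalIntegrable D volume a b := by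
        rw [intervalIntegrable_iff_integrableOn_Ioc_of_le hab.le]
        exact (integrableOn_Ioc_iff_integrableOn_Ioo).mpr hDint
      have heq := intervalIntegral.integral_eq_sub_of_hasDerivAt_of_le hab.le
        hcont_h.continuousOn hds hII
      rw [← integral_Ioc_eq_integral_Ioo, ← intervalIntegral.integral_of_le hab.le, heq,
        hhdef]
      simp [hpa, hpb]
  -- conclusion
  have hsub := integral_sub hint2' hint1'
  have hkey : ∫ x in s, p x * f₁ x = ∫ x in s, p x * f₂ x := by
    have : ∫ x in s, D x = (∫ x in s, p x * f₂ x) - ∫ x in s, p x * f₁ x := by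
      rw [hDdef]
      exact hsub
    rw [hmain] at this
    linarith
  calc ∫ ω, (X ω - μ) * φ (X ω) ∂ℙ
      = ∫ x, max (p x) 0 * f₁ x := transfer f₁ hf₁_meas
    _ = ∫ x in s, p x * f₁ x := by rw [hind f₁, integral_indicator hsm]
    _ = ∫ x in s, p x * f₂ x := hkey
    _ = ∫ x, max (p x) 0 * f₂ x := by rw [hind f₂, integral_indicator hsm]
    _ = ∫ ω, (δ₁ * (X ω - μ) ^ 2 + δ₂ * (X ω - μ) + δ₃) * deriv φ (X ω) ∂ℙ :=
        (transfer f₂ hf₂_meas).symm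
end

section
/- Let W have mean zero and finite variance σ², and let W* have the W-zero-biased distribution, so E[Wφ(W)] = σ² E[φ'(W*)] for all suitable φ. Then for all differentiable g with Var[g(W)] finite, σ²(E[g'(W*)])² ≤ Var[g(W)] ≤ σ² E[g'(W*)²]. -/
open MeasureTheory ProbabilityTheory Set
open scoped ENNReal NNReal

namespace ZBAux

lemma abs_le_sq_add_one (a : ℝ) : |a| ≤ a ^ 2 + 1 := by
  nlinarith [sq_nonneg (|a| - 1), sq_abs a, abs_nonneg a]

lemma volume_uIoc (x : ℝ) : volume (Set.uIoc (0:ℝ) x) = ENNReal.ofReal |x| := by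
  rw [Set.uIoc, Real.volume_Ioc]
  congr 1
  rw [max_sub_min_eq_abs]
  simp

lemma meas_ker {Ω : Type*} [MeasurableSpace Ω] {W : Ω → ℝ} (hW : Measurable W)
    {u : Ω × ℝ → ℝ≥0∞} (hu : Measurable u) :
    Measurable fun p : Ω × ℝ => (Set.uIoc (0:ℝ) (W p.1)).indicator (fun _ => u p) p.2 := by
  have h1 : (fun p : Ω × ℝ => (Set.uIoc (0:ℝ) (W p.1)).indicator (fun _ => u p) p.2)
      = ({p : Ω × ℝ | p.2 ∈ Set.uIoc (0:ℝ) (W p.1)}).indicator u := by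
    funext p
    by_cases hp : p.2 ∈ Set.uIoc (0:ℝ) (W p.1)
    · rw [Set.indicator_of_mem hp, Set.indicator_of_mem (by exact hp)]
    · rw [Set.indicator_of_notMem hp, Set.indicator_of_notMem (by exact hp)]
  rw [h1]
  refine hu.indicator ?_
  have h2 : {p : Ω × ℝ | p.2 ∈ Set.uIoc (0:ℝ) (W p.1)}
      = {p : Ω × ℝ | (0:ℝ) ⊓ W p.1 < p.2} ∩ {p : Ω × ℝ | p.2 ≤ (0:ℝ) ⊔ W p.1} := by
    ext p
    simp [Set.uIoc, Set.mem_Ioc]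
  rw [h2]
  exact (measurableSet_lt (measurable_const.inf (hW.comp measurable_fst)) measurable_snd).inter
    (measurableSet_le measurable_snd (measurable_const.sup (hW.comp measurable_fst)))

lemma tonelli {Ω : Type*} [MeasurableSpace Ω] (P : Measure Ω) [IsFiniteMeasure P]
    {W : Ω → ℝ} (hW : Measurable W) (v : ℝ → ℝ≥0∞) (hv : Measurable v) (hv' : ∀ t, v t ≠ ∞) :
    ∫⁻ t, (v t * (∫⁻ ω, (Set.uIoc (0:ℝ) (W ω)).indicator (fun _ => ENNReal.ofReal |W ω|) t ∂P))
        ∂(volume : Measure ℝ) =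
      ∫⁻ ω, ENNReal.ofReal |W ω| * (∫⁻ t in Set.uIoc (0:ℝ) (W ω), v t ∂(volume : Measure ℝ)) ∂P := by
  have he : Measurable fun p : Ω × ℝ =>
      (Set.uIoc (0:ℝ) (W p.1)).indicator (fun _ => ENNReal.ofReal |W p.1|) p.2 :=
    meas_ker hW (ENNReal.measurable_ofReal.comp (hW.comp measurable_fst).abs)
  calc ∫⁻ t, (v t * (∫⁻ ω, (Set.uIoc (0:ℝ) (W ω)).indicator (fun _ => ENNReal.ofReal |W ω|) t ∂P))
        ∂(volume : Measure ℝ)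
      = ∫⁻ t, (∫⁻ ω, v t * (Set.uIoc (0:ℝ) (W ω)).indicator (fun _ => ENNReal.ofReal |W ω|) t ∂P)
          ∂(volume : Measure ℝ) :=
        lintegral_congr fun t => (lintegral_const_mul' (v t) _ (hv' t)).symm
    _ = ∫⁻ ω, (∫⁻ t, v t * (Set.uIoc (0:ℝ) (W ω)).indicator (fun _ => ENNReal.ofReal |W ω|) t
          ∂(volume : Measure ℝ)) ∂P := by
        refine lintegral_lintegral_swap ?_
        exact ((hv.comp measurable_fst).mul (he.comp measurable_swap)).aemeasurable
    _ = ∫⁻ ω, ENNReal.ofReal |W ω| * (∫⁻ t in Set.uIoc (0:ℝ) (W ω), v t ∂(volume : Measure ℝ))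
          ∂P := by
        refine lintegral_congr fun ω => ?_
        have h3 : ∀ t, v t * (Set.uIoc (0:ℝ) (W ω)).indicator (fun _ => ENNReal.ofReal |W ω|) t
            = (Set.uIoc (0:ℝ) (W ω)).indicator (fun t => v t * ENNReal.ofReal |W ω|) t := by
          intro t
          by_cases ht : t ∈ Set.uIoc (0:ℝ) (W ω)
          · rw [Set.indicator_of_mem ht, Set.indicator_of_mem ht]
          · rw [Set.indicator_of_notMem ht, Set.indicator_of_notMem ht, mul_zero]
        simp_rw [h3]
        rw [lintegral_indicator measurableSet_uIoc, lintegral_mul_const' _ _ ENNReal.ofReal_ne_top,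
          mul_comm]

lemma ptwise {g : ℝ → ℝ} (hg : Differentiable ℝ g) (x : ℝ)
    (hfin : ENNReal.ofReal |x| *
        (∫⁻ t in Set.uIoc (0:ℝ) x, ENNReal.ofReal ((deriv g t)^2) ∂(volume : Measure ℝ)) ≠ ∞) :
    ENNReal.ofReal ((g x - g 0)^2)
      ≤ ENNReal.ofReal |x| *
        ∫⁻ t in Set.uIoc (0:ℝ) x, ENNReal.ofReal ((deriv g t)^2) ∂(volume : Measure ℝ) := by
  rcases eq_or_ne x 0 with rfl | hx
  · simp
  set s : Set ℝ := Set.uIoc (0:ℝ) x with hs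
  set J : ℝ≥0∞ := ∫⁻ t in s, ENNReal.ofReal ((deriv g t)^2) ∂(volume : Measure ℝ) with hJdef
  have hvol : volume s = ENNReal.ofReal |x| := volume_uIoc x
  have hne0 : ENNReal.ofReal |x| ≠ 0 := (ENNReal.ofReal_pos.2 (abs_pos.2 hx)).ne'
  have hJtop : J ≠ ∞ := by
    intro h
    exact hfin (by rw [h, ENNReal.mul_top hne0])
  have hmeas : Measurable (deriv g) := measurable_deriv g
  have hsq_int : IntegrableOn (fun t => (deriv g t)^2) s volume := by
    have h1 : AEMeasurable (fun t => ENNReal.ofReal ((deriv g t)^2)) (volume.restrict s) :=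
      (ENNReal.measurable_ofReal.comp (hmeas.pow_const 2)).aemeasurable
    have h2 := integrable_toReal_of_lintegral_ne_top h1 hJtop
    refine h2.congr (ae_of_all _ fun t => ?_)
    simp only []
    rw [ENNReal.toReal_ofReal (sq_nonneg _)]
  have habs_int : IntegrableOn (fun t => |deriv g t|) s volume := by
    have hc : IntegrableOn (fun _ : ℝ => (1:ℝ)) s volume :=
      integrableOn_const (by rw [hvol]; exact ENNReal.ofReal_ne_top)
    refine Integrable.mono' (hsq_int.add hc) (hmeas.abs.aestronglyMeasurable) ?_
    refine ae_of_all _ fun t => ?_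
    rw [Real.norm_eq_abs, abs_abs]
    exact abs_le_sq_add_one _
  have hgint : IntervalIntegrable (deriv g) volume 0 x := by
    rw [intervalIntegrable_iff]
    exact (integrable_norm_iff hmeas.aestronglyMeasurable.restrict).1
      (by simpa [Real.norm_eq_abs, hs] using habs_int.integrable)
  have hftc : ∫ t in (0:ℝ)..x, deriv g t = g x - g 0 :=
    intervalIntegral.integral_eq_sub_of_hasDerivAt (fun t _ => (hg t).hasDerivAt) hgint
  have h1 : |g x - g 0| ≤ ∫ t in s, |deriv g t| ∂(volume : Measure ℝ) := by
    rw [← hftc, intervalIntegral.intervalIntegral_eq_integral_uIoc, smul_eq_mul]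
    calc |(if (0:ℝ) ≤ x then (1:ℝ) else -1) * ∫ t in s, deriv g t ∂(volume : Measure ℝ)|
        = |∫ t in s, deriv g t ∂(volume : Measure ℝ)| := by
          split <;> simp [abs_mul]
      _ ≤ ∫ t in s, |deriv g t| ∂(volume : Measure ℝ) := by
          simpa [Real.norm_eq_abs] using
            norm_integral_le_integral_norm (μ := volume.restrict s) (deriv g)
  have hA : ENNReal.ofReal (∫ t in s, |deriv g t| ∂(volume : Measure ℝ))
      = ∫⁻ t in s, ENNReal.ofReal |deriv g t| ∂(volume : Measure ℝ) :=
    ofReal_integral_eq_lintegral_ofReal habs_int (ae_of_all _ fun t => abs_nonneg _)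
  have hH : (∫⁻ t in s, ENNReal.ofReal |deriv g t| ∂(volume : Measure ℝ))
      ≤ J ^ (1/2:ℝ) * (volume s) ^ (1/2:ℝ) := by
    have hconj : Real.HolderConjugate 2 2 := Real.HolderConjugate.two_two
    have hH0 := ENNReal.lintegral_mul_le_Lp_mul_Lq (volume.restrict s) hconj
      (f := fun t => ENNReal.ofReal |deriv g t|) (g := fun _ => (1:ℝ≥0∞))
      ((ENNReal.measurable_ofReal.comp hmeas.abs)).aemeasurable aemeasurable_const
    simp only [Pi.mul_apply, mul_one, ENNReal.one_rpow, one_mul] at hH0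
    have hf2 : ∀ t : ℝ, (ENNReal.ofReal |deriv g t|) ^ (2:ℝ) = ENNReal.ofReal ((deriv g t)^2) := by
      intro t
      rw [ENNReal.ofReal_rpow_of_nonneg (abs_nonneg _) (by norm_num : (0:ℝ) ≤ 2)]
      congr 1
      rw [Real.rpow_two, sq_abs]
    simp_rw [hf2] at hH0
    have hone : ∫⁻ _ in s, (1:ℝ≥0∞) ∂(volume : Measure ℝ) = volume s := setLIntegral_one s
    rw [hone] at hH0
    simpa using hH0
  have hsq : (∫⁻ t in s, ENNReal.ofReal |deriv g t| ∂(volume : Measure ℝ)) ^ 2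
      ≤ J * volume s := by
    calc (∫⁻ t in s, ENNReal.ofReal |deriv g t| ∂(volume : Measure ℝ)) ^ 2
        ≤ (J ^ (1/2:ℝ) * (volume s) ^ (1/2:ℝ)) ^ 2 := pow_le_pow_left₀ zero_le hH 2
      _ = J * volume s := by
        rw [mul_pow, ← ENNReal.rpow_natCast (J ^ (1/2:ℝ)) 2,
          ← ENNReal.rpow_natCast ((volume s) ^ (1/2:ℝ)) 2, ← ENNReal.rpow_mul,
          ← ENNReal.rpow_mul]
        norm_num
  calc ENNReal.ofReal ((g x - g 0)^2)
      = ENNReal.ofReal (|g x - g 0|^2) := by rw [sq_abs]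
    _ = ENNReal.ofReal |g x - g 0| ^ 2 := by rw [ENNReal.ofReal_pow (abs_nonneg _)]
    _ ≤ (∫⁻ t in s, ENNReal.ofReal |deriv g t| ∂(volume : Measure ℝ)) ^ 2 :=
        pow_le_pow_left₀ zero_le (le_trans (ENNReal.ofReal_le_ofReal h1) (le_of_eq hA)) 2
    _ ≤ J * volume s := hsq
    _ = ENNReal.ofReal |x| * J := by rw [hvol, mul_comm]


end ZBAux

open ZBAux

/-- Zero-bias variance bounds: if `E[Wφ(W)] = σ² E[φ'(W*)]` for all suitable `φ`, then
`σ²(E[g'(W*)])² ≤ Var[g(W)] ≤ σ² E[g'(W*)²]`. -/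
theorem stmt12 {Ω : Type*} [MeasureSpace Ω] [IsProbabilityMeasure (ℙ : Measure Ω)]
    (W Wstar : Ω → ℝ) (hWmeas : Measurable W) (hWstarmeas : Measurable Wstar)
    (σ : ℝ) (hσ : 0 < σ)
    (hmean : ∫ ω, W ω ∂ℙ = 0) (hvar : variance W ℙ = σ ^ 2)
    (hzb : ∀ φ : ℝ → ℝ, Differentiable ℝ φ →
      Integrable (fun ω => W ω * φ (W ω)) ℙ →
      Integrable (fun ω => deriv φ (Wstar ω)) ℙ →
      ∫ ω, W ω * φ (W ω) ∂ℙ = σ ^ 2 * ∫ ω, deriv φ (Wstar ω) ∂ℙ)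
    (g : ℝ → ℝ) (hg : Differentiable ℝ g)
    (hgW : MemLp (fun ω => g (W ω)) 2 ℙ)
    (hInt₁ : Integrable (fun ω => deriv g (Wstar ω)) ℙ)
    (hInt₂ : Integrable (fun ω => (deriv g (Wstar ω)) ^ 2) ℙ) :
    σ ^ 2 * (∫ ω, deriv g (Wstar ω) ∂ℙ) ^ 2 ≤ variance (fun ω => g (W ω)) ℙ ∧
    variance (fun ω => g (W ω)) ℙ ≤ σ ^ 2 * ∫ ω, (deriv g (Wstar ω)) ^ 2 ∂ℙ := by
  classical
  have hσ2pos : (0:ℝ) < σ ^ 2 := by positivity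
  -- W is square integrable
  have hW2 : MemLp W 2 ℙ := by
    by_contra h
    have htop := evariance_eq_top hWmeas.aestronglyMeasurable h
    rw [variance, htop] at hvar
    simp at hvar
    nlinarith
  have hWint : Integrable W ℙ := hW2.integrable one_le_two
  have hWsq_int : Integrable (fun ω => W ω ^ 2) ℙ := hW2.integrable_sq
  have hEW2 : ∫ ω, W ω ^ 2 ∂ℙ = σ ^ 2 := by
    have hvd := variance_eq_sub hW2
    rw [hvar, hmean] at hvd
    simp only [Pi.pow_apply] at hvd
    linarith [hvd]
  set m : ℝ := ∫ ω, g (W ω) ∂ℙ with hm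
  have hgWint : Integrable (fun ω => g (W ω)) ℙ := hgW.integrable one_le_two
  have hgmeas : Measurable (deriv g) := measurable_deriv g
  ------------------------------------------------------------------
  -- LOWER BOUND
  ------------------------------------------------------------------
  have hWg_int : Integrable (fun ω => W ω * g (W ω)) ℙ := by
    have h1 : (1:ℝ≥0∞)/1 = 1/2 + 1/2 := by
      rw [ENNReal.add_halves]
      norm_num
    have h2 : MemLp (W • fun ω => g (W ω)) 1 ℙ := hgW.smul hW2
    have h3 := memLp_one_iff_integrable.1 h2
    exact h3.congr (ae_of_all _ fun ω => by simp [Pi.smul_apply', smul_eq_mul])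
  have hzbg := hzb g hg hWg_int hInt₁
  set D : ℝ := ∫ ω, deriv g (Wstar ω) ∂ℙ with hD
  have hWgm_int : Integrable (fun ω => W ω * (g (W ω) - m)) ℙ := by
    have h1 := hWg_int.sub (hWint.mul_const m)
    exact h1.congr (ae_of_all _ fun ω => by simp only [Pi.sub_apply]; ring)
  have hJ : ∫ ω, W ω * (g (W ω) - m) ∂ℙ = σ ^ 2 * D := by
    have h1 : (fun ω => W ω * (g (W ω) - m)) = fun ω => W ω * g (W ω) - m * W ω := by
      funext ω; ring
    rw [h1, integral_sub hWg_int (hWint.const_mul m), integral_const_mul, hmean, mul_zero,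
      sub_zero, hzbg]
  have hY2m : MemLp (fun ω => g (W ω) - m) 2 ℙ := hgW.sub (memLp_const m)
  have hbvar : variance (fun ω => g (W ω)) ℙ = ∫ ω, (g (W ω) - m) ^ 2 ∂ℙ := by
    rw [variance_eq_integral hgW.aestronglyMeasurable.aemeasurable]
  have hCS : (σ ^ 2 * D) ^ 2 ≤ σ ^ 2 * variance (fun ω => g (W ω)) ℙ := by
    have hconj : Real.HolderConjugate 2 2 := Real.HolderConjugate.two_two
    have hWabs : MemLp (fun ω => |W ω|) (ENNReal.ofReal 2) ℙ := by
      rw [show ENNReal.ofReal 2 = 2 by simp]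
      exact hW2.abs
    have hYabs : MemLp (fun ω => |g (W ω) - m|) (ENNReal.ofReal 2) ℙ := by
      rw [show ENNReal.ofReal 2 = 2 by simp]
      exact hY2m.abs
    have hHold := integral_mul_le_Lp_mul_Lq_of_nonneg hconj
      (ae_of_all _ fun ω => abs_nonneg (W ω)) (ae_of_all _ fun ω => abs_nonneg (g (W ω) - m))
      hWabs hYabs
    have e1 : ∫ ω, |W ω| ^ (2:ℝ) ∂ℙ = σ ^ 2 := by
      rw [← hEW2]
      exact integral_congr_ae (ae_of_all _ fun ω => by simp [Real.rpow_two, sq_abs])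
    have e2 : ∫ ω, |g (W ω) - m| ^ (2:ℝ) ∂ℙ = variance (fun ω => g (W ω)) ℙ := by
      rw [hbvar]
      exact integral_congr_ae (ae_of_all _ fun ω => by simp [Real.rpow_two, sq_abs])
    rw [e1, e2] at hHold
    have habsle : |∫ ω, W ω * (g (W ω) - m) ∂ℙ| ≤ ∫ ω, |W ω| * |g (W ω) - m| ∂ℙ := by
      have h4 := norm_integral_le_integral_norm (f := fun ω => W ω * (g (W ω) - m)) (μ := ℙ)
      simpa [Real.norm_eq_abs, abs_mul] using h4
    have hvarnn : 0 ≤ variance (fun ω => g (W ω)) ℙ := variance_nonneg _ _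
    have h6 : |σ ^ 2 * D| ≤ (σ ^ 2) ^ (1/2:ℝ) * (variance (fun ω => g (W ω)) ℙ) ^ (1/2:ℝ) := by
      rw [← hJ]
      exact habsle.trans hHold
    calc (σ ^ 2 * D) ^ 2 = |σ ^ 2 * D| ^ 2 := (sq_abs _).symm
      _ ≤ ((σ ^ 2) ^ (1/2:ℝ) * (variance (fun ω => g (W ω)) ℙ) ^ (1/2:ℝ)) ^ 2 :=
          pow_le_pow_left₀ (abs_nonneg _) h6 2
      _ = σ ^ 2 * variance (fun ω => g (W ω)) ℙ := by
          rw [mul_pow, ← Real.rpow_natCast ((σ ^ 2) ^ (1/2:ℝ)) 2,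
            ← Real.rpow_natCast ((variance (fun ω => g (W ω)) ℙ) ^ (1/2:ℝ)) 2,
            ← Real.rpow_mul hσ2pos.le, ← Real.rpow_mul hvarnn]
          norm_num
  have hlower : σ ^ 2 * D ^ 2 ≤ variance (fun ω => g (W ω)) ℙ := by
    have h8 : (σ ^ 2 * D) ^ 2 = σ ^ 2 * (σ ^ 2 * D ^ 2) := by ring
    rw [h8] at hCS
    exact le_of_mul_le_mul_left hCS hσ2pos

  ------------------------------------------------------------------
  -- UPPER BOUND
  ------------------------------------------------------------------
  set κ : ℝ → ℝ≥0∞ := fun t =>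
    ∫⁻ ω, (Set.uIoc (0:ℝ) (W ω)).indicator (fun _ => ENNReal.ofReal |W ω|) t ∂ℙ with hκdef
  have hκmeas : Measurable κ := by
    have he : Measurable fun p : Ω × ℝ =>
        (Set.uIoc (0:ℝ) (W p.1)).indicator (fun _ => ENNReal.ofReal |W p.1|) p.2 :=
      meas_ker hWmeas (ENNReal.measurable_ofReal.comp (hWmeas.comp measurable_fst).abs)
    exact he.lintegral_prod_left'
  have hT : ∀ v : ℝ → ℝ≥0∞, Measurable v → (∀ t, v t ≠ ∞) →
      (∫⁻ t, v t * κ t ∂(volume : Measure ℝ)) =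
        ∫⁻ ω, ENNReal.ofReal |W ω| *
          (∫⁻ t in Set.uIoc (0:ℝ) (W ω), v t ∂(volume : Measure ℝ)) ∂ℙ :=
    fun v hv hv' => tonelli ℙ hWmeas v hv hv'
  set σ2 : ℝ≥0∞ := ENNReal.ofReal (σ ^ 2) with hσ2def
  have hσ2ne0 : σ2 ≠ 0 := (ENNReal.ofReal_pos.2 hσ2pos).ne'
  have hσ2netop : σ2 ≠ ∞ := ENNReal.ofReal_ne_top
  have hκtotal : (∫⁻ t, κ t ∂(volume : Measure ℝ)) = σ2 := by
    have h1 := hT (fun _ => 1) measurable_const (fun _ => ENNReal.one_ne_top)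
    simp only [one_mul] at h1
    rw [h1]
    have h2 : ∀ ω : Ω, ENNReal.ofReal |W ω| *
        (∫⁻ _ in Set.uIoc (0:ℝ) (W ω), (1:ℝ≥0∞) ∂(volume : Measure ℝ))
        = ENNReal.ofReal (W ω ^ 2) := by
      intro ω
      rw [setLIntegral_one, volume_uIoc, ← ENNReal.ofReal_mul (abs_nonneg _)]
      congr 1
      rw [abs_mul_abs_self]
      ring
    simp_rw [h2]
    rw [← ofReal_integral_eq_lintegral_ofReal hWsq_int (ae_of_all _ fun ω => sq_nonneg _), hEW2]
  set ν : Measure ℝ := (volume : Measure ℝ).withDensity (fun t => σ2⁻¹ * κ t) with hνdef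
  have hδmeas : Measurable fun t => σ2⁻¹ * κ t := hκmeas.const_mul _
  have hmap : Measure.map Wstar ℙ = ν := by
    haveI : IsProbabilityMeasure (Measure.map Wstar ℙ) := Measure.isProbabilityMeasure_map hWstarmeas.aemeasurable
    refine ext_of_forall_lintegral_eq_of_IsFiniteMeasure ?_
    intro f
    set ψ : ℝ → ℝ := fun x => (f x : ℝ) with hψdef
    have hψc : Continuous ψ := NNReal.continuous_coe.comp f.continuous
    have hψm : Measurable ψ := hψc.measurable
    have hψ0 : ∀ x, 0 ≤ ψ x := fun x => (f x).2
    obtain ⟨C, hC⟩ := f.bounded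
    have hC0 : 0 ≤ C := le_trans dist_nonneg (hC 0 0)
    set B : ℝ := ψ 0 + C with hBdef
    have hB0 : 0 ≤ B := add_nonneg (hψ0 0) hC0
    have hψb : ∀ x, ψ x ≤ B := by
      intro x
      have h0 := hC x 0
      rw [NNReal.dist_eq] at h0
      have h1 := (abs_le.1 h0).2
      simp only [hBdef]
      have h2 : ψ x - ψ 0 ≤ C := h1
      linarith
    set Ψ : ℝ → ℝ := fun x => ∫ t in (0:ℝ)..x, ψ t with hΨdef
    have hΨd : ∀ x, HasDerivAt Ψ (ψ x) x := fun x =>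
      intervalIntegral.integral_hasDerivAt_right (hψc.intervalIntegrable _ _)
        (hψc.stronglyMeasurableAtFilter _ _) hψc.continuousAt
    have hΨdiff : Differentiable ℝ Ψ := fun x => (hΨd x).differentiableAt
    have hΨderiv : deriv Ψ = ψ := funext fun x => (hΨd x).deriv
    have hΨb : ∀ x, |Ψ x| ≤ B * |x| := by
      intro x
      have h3 := intervalIntegral.norm_integral_le_of_norm_le_const
        (C := B) (f := ψ) (a := (0:ℝ)) (b := x) (fun t _ => by
          rw [Real.norm_eq_abs, abs_of_nonneg (hψ0 t)]; exact hψb t)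
      simpa [Real.norm_eq_abs, sub_zero] using h3
    have hint1 : Integrable (fun ω => W ω * Ψ (W ω)) ℙ := by
      refine Integrable.mono' (hWsq_int.const_mul B)
        ((hWmeas.mul ((hΨdiff.continuous.measurable).comp hWmeas)).aestronglyMeasurable)
        (ae_of_all _ fun ω => ?_)
      rw [Real.norm_eq_abs, abs_mul]
      calc |W ω| * |Ψ (W ω)| ≤ |W ω| * (B * |W ω|) :=
            mul_le_mul_of_nonneg_left (hΨb _) (abs_nonneg _)
        _ = B * W ω ^ 2 := by
            rw [show |W ω| * (B * |W ω|) = B * (|W ω| * |W ω|) by ring, abs_mul_abs_self]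
            ring
    have hint2 : Integrable (fun ω => ψ (Wstar ω)) ℙ := by
      refine Integrable.mono' (integrable_const B)
        ((hψm.comp hWstarmeas).aestronglyMeasurable) (ae_of_all _ fun ω => ?_)
      rw [Real.norm_eq_abs, abs_of_nonneg (hψ0 _)]
      exact hψb _
    have hint2' : Integrable (fun ω => deriv Ψ (Wstar ω)) ℙ := by rw [hΨderiv]; exact hint2
    have hkey := hzb Ψ hΨdiff hint1 hint2'
    rw [hΨderiv] at hkey
    have hpt : ∀ x : ℝ, x * Ψ x
        = |x| * ∫ t in Set.uIoc (0:ℝ) x, ψ t ∂(volume : Measure ℝ) := by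
      intro x
      rcases le_or_gt 0 x with hx | hx
      · rw [Set.uIoc_of_le hx, abs_of_nonneg hx, hΨdef]
        simp only []
        rw [intervalIntegral.integral_of_le hx]
      · rw [Set.uIoc_of_ge hx.le, abs_of_neg hx, hΨdef]
        simp only []
        rw [intervalIntegral.integral_symm, intervalIntegral.integral_of_le hx.le]
        ring
    have hψon : ∀ x : ℝ, IntegrableOn ψ (Set.uIoc (0:ℝ) x) volume := fun x =>
      intervalIntegrable_iff.1 (hψc.intervalIntegrable 0 x)
    have hfmeas : Measurable fun x => (f x : ℝ≥0∞) :=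
      measurable_coe_nnreal_ennreal.comp f.continuous.measurable
    have hofreal : ∀ x : ℝ, ENNReal.ofReal (ψ x) = (f x : ℝ≥0∞) := fun x =>
      ENNReal.ofReal_coe_nnreal
    have hmid : (∫⁻ t, (f t : ℝ≥0∞) * κ t ∂(volume : Measure ℝ))
        = ENNReal.ofReal (∫ ω, W ω * Ψ (W ω) ∂ℙ) := by
      rw [hT (fun t => (f t : ℝ≥0∞)) hfmeas (fun t => ENNReal.coe_ne_top)]
      rw [ofReal_integral_eq_lintegral_ofReal hint1 (ae_of_all _ fun ω => by
        simp only [Pi.zero_apply]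
        rw [hpt (W ω)]
        exact mul_nonneg (abs_nonneg _)
          (setIntegral_nonneg measurableSet_uIoc fun t _ => hψ0 t))]
      refine (lintegral_congr fun ω => ?_).symm
      rw [hpt (W ω), ENNReal.ofReal_mul (abs_nonneg _),
        ofReal_integral_eq_lintegral_ofReal (hψon (W ω)) (ae_of_all _ fun t => hψ0 t)]
      congr 1
      exact lintegral_congr fun t => hofreal t
    rw [lintegral_map hfmeas hWstarmeas]
    have hL : (∫⁻ ω, (f (Wstar ω) : ℝ≥0∞) ∂ℙ) = ENNReal.ofReal (∫ ω, ψ (Wstar ω) ∂ℙ) := by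
      rw [ofReal_integral_eq_lintegral_ofReal hint2 (ae_of_all _ fun ω => hψ0 _)]
      exact lintegral_congr fun ω => (hofreal (Wstar ω)).symm
    have hR : (∫⁻ x, (f x : ℝ≥0∞) ∂ν)
        = σ2⁻¹ * ∫⁻ t, (f t : ℝ≥0∞) * κ t ∂(volume : Measure ℝ) := by
      rw [hνdef, lintegral_withDensity_eq_lintegral_mul _ hδmeas hfmeas]
      simp only [Pi.mul_apply]
      have hcomm : ∀ t, (σ2⁻¹ * κ t) * (f t : ℝ≥0∞) = σ2⁻¹ * ((f t : ℝ≥0∞) * κ t) := fun t => by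
        ring
      simp_rw [hcomm]
      rw [lintegral_const_mul' _ _ (ENNReal.inv_ne_top.2 hσ2ne0)]
    rw [hL, hR, hmid, hkey]
    rw [ENNReal.ofReal_mul (sq_nonneg σ), ← hσ2def, ← mul_assoc,
      ENNReal.inv_mul_cancel hσ2ne0 hσ2netop, one_mul]
  have hstar : ∀ v : ℝ → ℝ≥0∞, Measurable v →
      (∫⁻ ω, v (Wstar ω) ∂ℙ) = σ2⁻¹ * ∫⁻ t, v t * κ t ∂(volume : Measure ℝ) := by
    intro v hv
    rw [← lintegral_map hv hWstarmeas, hmap, hνdef,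
      lintegral_withDensity_eq_lintegral_mul _ hδmeas hv]
    simp only [Pi.mul_apply]
    have hcomm : ∀ t, (σ2⁻¹ * κ t) * v t = σ2⁻¹ * (v t * κ t) := fun t => by ring
    simp_rw [hcomm]
    rw [lintegral_const_mul' _ _ (ENNReal.inv_ne_top.2 hσ2ne0)]
  set R₂ : ℝ := ∫ ω, (deriv g (Wstar ω)) ^ 2 ∂ℙ with hR₂def
  have hR₂0 : 0 ≤ R₂ := integral_nonneg fun ω => sq_nonneg _
  have hv2meas : Measurable fun t => ENNReal.ofReal ((deriv g t) ^ 2) :=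
    ENNReal.measurable_ofReal.comp (hgmeas.pow_const 2)
  have hΛ : (∫⁻ t, ENNReal.ofReal ((deriv g t) ^ 2) * κ t ∂(volume : Measure ℝ))
      = ENNReal.ofReal (σ ^ 2 * R₂) := by
    have h1 := hstar _ hv2meas
    have h2 : (∫⁻ ω, ENNReal.ofReal ((deriv g (Wstar ω)) ^ 2) ∂ℙ) = ENNReal.ofReal R₂ :=
      (ofReal_integral_eq_lintegral_ofReal hInt₂ (ae_of_all _ fun ω => sq_nonneg _)).symm
    rw [h2] at h1
    rw [ENNReal.ofReal_mul (sq_nonneg σ), ← hσ2def]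
    calc (∫⁻ t, ENNReal.ofReal ((deriv g t) ^ 2) * κ t ∂(volume : Measure ℝ))
        = (σ2 * σ2⁻¹) * (∫⁻ t, ENNReal.ofReal ((deriv g t) ^ 2) * κ t
            ∂(volume : Measure ℝ)) := by
          rw [ENNReal.mul_inv_cancel hσ2ne0 hσ2netop, one_mul]
      _ = σ2 * ENNReal.ofReal R₂ := by rw [mul_assoc, ← h1]
  have hT2 := hT _ hv2meas (fun t => ENNReal.ofReal_ne_top)
  rw [hΛ] at hT2
  have hJmeasfn : Measurable fun ω =>
      ENNReal.ofReal |W ω| * (∫⁻ t in Set.uIoc (0:ℝ) (W ω),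
        ENNReal.ofReal ((deriv g t) ^ 2) ∂(volume : Measure ℝ)) := by
    refine (ENNReal.measurable_ofReal.comp hWmeas.abs).mul ?_
    have heq : ∀ ω : Ω, (∫⁻ t in Set.uIoc (0:ℝ) (W ω),
        ENNReal.ofReal ((deriv g t) ^ 2) ∂(volume : Measure ℝ))
        = ∫⁻ t, (Set.uIoc (0:ℝ) (W ω)).indicator
            (fun t => ENNReal.ofReal ((deriv g t) ^ 2)) t ∂(volume : Measure ℝ) :=
      fun ω => (lintegral_indicator measurableSet_uIoc _).symm
    simp_rw [heq]
    have hker := meas_ker (W := W) hWmeas (u := fun p => ENNReal.ofReal ((deriv g p.2) ^ 2))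
      (hv2meas.comp measurable_snd)
    have heq2 : ∀ p : Ω × ℝ, (Set.uIoc (0:ℝ) (W p.1)).indicator
        (fun _ => ENNReal.ofReal ((deriv g p.2) ^ 2)) p.2
        = (Set.uIoc (0:ℝ) (W p.1)).indicator
            (fun t => ENNReal.ofReal ((deriv g t) ^ 2)) p.2 := by
      intro p
      by_cases hp : p.2 ∈ Set.uIoc (0:ℝ) (W p.1)
      · rw [Set.indicator_of_mem hp, Set.indicator_of_mem hp]
      · rw [Set.indicator_of_notMem hp, Set.indicator_of_notMem hp]
    simp_rw [heq2] at hker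
    exact hker.lintegral_prod_right'
  have hfinae : ∀ᵐ ω ∂ℙ, ENNReal.ofReal |W ω| *
      (∫⁻ t in Set.uIoc (0:ℝ) (W ω),
        ENNReal.ofReal ((deriv g t) ^ 2) ∂(volume : Measure ℝ)) ≠ ∞ := by
    have h1 := ae_lt_top hJmeasfn (by rw [← hT2]; exact ENNReal.ofReal_ne_top)
    filter_upwards [h1] with ω h using h.ne
  have hptae : ∀ᵐ ω ∂ℙ, ENNReal.ofReal ((g (W ω) - g 0) ^ 2) ≤ ENNReal.ofReal |W ω| *
      (∫⁻ t in Set.uIoc (0:ℝ) (W ω),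
        ENNReal.ofReal ((deriv g t) ^ 2) ∂(volume : Measure ℝ)) := by
    filter_upwards [hfinae] with ω h using ptwise hg (W ω) h
  have hchain : (∫⁻ ω, ENNReal.ofReal ((g (W ω) - g 0) ^ 2) ∂ℙ)
      ≤ ENNReal.ofReal (σ ^ 2 * R₂) := by
    calc (∫⁻ ω, ENNReal.ofReal ((g (W ω) - g 0) ^ 2) ∂ℙ)
        ≤ _ := lintegral_mono_ae hptae
      _ = ENNReal.ofReal (σ ^ 2 * R₂) := hT2.symm
  have hY2' : MemLp (fun ω => g (W ω) - g 0) 2 ℙ := hgW.sub (memLp_const (g 0))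
  have hYsq : Integrable (fun ω => (g (W ω) - g 0) ^ 2) ℙ := hY2'.integrable_sq
  have hEY2 : ∫ ω, (g (W ω) - g 0) ^ 2 ∂ℙ ≤ σ ^ 2 * R₂ := by
    have heq := ofReal_integral_eq_lintegral_ofReal hYsq (ae_of_all _ fun ω => sq_nonneg _)
    rw [← heq] at hchain
    exact (ENNReal.ofReal_le_ofReal_iff (by positivity)).1 hchain
  have hEYv : ∫ ω, (g (W ω) - g 0) ∂ℙ = m - g 0 := by
    rw [integral_sub hgWint (integrable_const _)]
    simp [hm]
  have hvshift : variance (fun ω => g (W ω)) ℙ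
      = variance (fun ω => g (W ω) - g 0) ℙ := by
    simp only [variance, evariance]
    refine congrArg ENNReal.toReal (lintegral_congr fun ω => ?_)
    rw [hEYv, ← hm, sub_sub_sub_cancel_right]
  have hvle : variance (fun ω => g (W ω) - g 0) ℙ ≤ ∫ ω, (g (W ω) - g 0) ^ 2 ∂ℙ := by
    have h9 := variance_le_expectation_sq (μ := ℙ) (X := fun ω => g (W ω) - g 0)
      hY2'.aestronglyMeasurable
    simpa using h9
  exact ⟨hlower, by rw [hvshift]; exact hvle.trans hEY2⟩
end

section
/- Let W have mean zero and finite variance σ², and W* have the W-zero-biased distribution, coupled on the same probability space. Then for all twice differentiable g with ‖g'g''‖ < ∞ and Var[g(W)] finite: Var[g(W)] ≤ σ² E[g'(W)²] + 2σ² ‖g'g''‖ E|W* − W|. -/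
open MeasureTheory ProbabilityTheory

/-- Cauchy–Schwarz on an interval. -/
lemma cs_aux (f : ℝ → ℝ) (hf : Continuous f) (a b : ℝ) (hab : a ≤ b) :
    (∫ t in Set.Ioc a b, f t)^2 ≤ (b - a) * ∫ t in Set.Ioc a b, (f t)^2 := by
  set μ := (volume : Measure ℝ).restrict (Set.Ioc a b)
  have hfin : IsFiniteMeasure μ := by
    constructor
    rw [Measure.restrict_apply_univ, Real.volume_Ioc]
    exact ENNReal.ofReal_lt_top
  have hmeas : AEStronglyMeasurable (fun t => |f t|) μ :=
    (hf.abs).aestronglyMeasurable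
  have hsq : Integrable (fun t => |f t| ^ 2) μ := by
    have : IntegrableOn (fun t => (f t)^2) (Set.Ioc a b) := (hf.pow 2).integrableOn_Ioc
    rw [show (fun t => |f t|^2) = fun t => (f t)^2 from funext fun t => sq_abs _]; exact this
  have hmem : MemLp (fun t => |f t|) (ENNReal.ofReal 2) μ := by
    rw [show ENNReal.ofReal 2 = 2 by norm_num]
    exact (memLp_two_iff_integrable_sq hmeas).2 hsq
  have hone : MemLp (fun _ : ℝ => (1:ℝ)) (ENNReal.ofReal 2) μ := memLp_const 1
  have hpq : Real.HolderConjugate 2 2 := by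
    constructor <;> norm_num
  have hholder := integral_mul_le_Lp_mul_Lq_of_nonneg hpq
    (Filter.Eventually.of_forall fun t => abs_nonneg (f t))
    (Filter.Eventually.of_forall fun _ => zero_le_one) hmem hone
  simp only [mul_one, Real.one_rpow, MeasureTheory.integral_const, smul_eq_mul] at hholder
  have hr2 : ∀ y : ℝ, y ^ (2:ℝ) = y ^ 2 := fun y => by
    rw [show (2:ℝ) = ((2:ℕ):ℝ) by norm_num, Real.rpow_natCast]
  simp only [hr2, sq_abs] at hholder
  have hμ : (μ Set.univ).toReal = b - a := by
    rw [Measure.restrict_apply_univ, Real.volume_Ioc, ENNReal.toReal_ofReal (by linarith)]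
  rw [show μ.real Set.univ = b - a from hμ] at hholder
  have hB : 0 ≤ ∫ t in Set.Ioc a b, (f t)^2 :=
    setIntegral_nonneg measurableSet_Ioc fun t _ => sq_nonneg _
  have hm : (0:ℝ) ≤ b - a := by linarith
  have hS := Real.sqrt_eq_rpow (∫ t in Set.Ioc a b, (f t)^2)
  have hT := Real.sqrt_eq_rpow (b - a)
  have h1 : |∫ t in Set.Ioc a b, f t| ≤ ∫ t in Set.Ioc a b, |f t| := by
    simpa using norm_integral_le_integral_norm (μ := μ) f
  rw [← hS, ← hT] at hholder
  nlinarith [Real.sq_sqrt hB, Real.sq_sqrt hm, Real.sqrt_nonneg (∫ t in Set.Ioc a b, (f t)^2),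
    Real.sqrt_nonneg (b - a), abs_nonneg (∫ t in Set.Ioc a b, f t), sq_abs (∫ t in Set.Ioc a b, f t),
    setIntegral_nonneg (μ := volume) measurableSet_Ioc fun t (_ : t ∈ Set.Ioc a b) => abs_nonneg (f t)]

/-- Zero-bias upper variance bound expressed in terms of `W` itself:
`Var[g(W)] ≤ σ² E[g'(W)²] + 2σ² ‖g'g''‖ E|W* − W|`. -/
theorem stmt14 {Ω : Type*} [MeasureSpace Ω] [IsProbabilityMeasure (ℙ : Measure Ω)]
    (W Wstar : Ω → ℝ) (hWmeas : Measurable W) (hWstarmeas : Measurable Wstar)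
    (σ : ℝ) (hσ : 0 < σ)
    (hmean : ∫ ω, W ω ∂ℙ = 0) (hvar : variance W ℙ = σ ^ 2)
    (hzb : ∀ φ : ℝ → ℝ, Differentiable ℝ φ →
      Integrable (fun ω => W ω * φ (W ω)) ℙ →
      Integrable (fun ω => deriv φ (Wstar ω)) ℙ →
      ∫ ω, W ω * φ (W ω) ∂ℙ = σ ^ 2 * ∫ ω, deriv φ (Wstar ω) ∂ℙ)
    (g : ℝ → ℝ) (hg : Differentiable ℝ g) (hg' : Differentiable ℝ (deriv g))
    (C : ℝ) (hC : ∀ x, |deriv g x * deriv (deriv g) x| ≤ C)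
    (hgW : MemLp (fun ω => g (W ω)) 2 ℙ)
    (hInt₁ : Integrable (fun ω => (deriv g (W ω)) ^ 2) ℙ)
    (hInt₂ : Integrable (fun ω => |Wstar ω - W ω|) ℙ) :
    variance (fun ω => g (W ω)) ℙ ≤
      σ ^ 2 * ∫ ω, (deriv g (W ω)) ^ 2 ∂ℙ +
        2 * σ ^ 2 * C * ∫ ω, |Wstar ω - W ω| ∂ℙ := by
  classical
  have cg' : Continuous (deriv g) := hg'.continuous
  have cg2 : Continuous (fun t => (deriv g t)^2) := cg'.pow 2
  have hC0 : 0 ≤ C := le_trans (abs_nonneg _) (hC 0)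
  -- Lipschitz bound on (deriv g)^2
  have lip : ∀ a b : ℝ, |(deriv g a)^2 - (deriv g b)^2| ≤ 2*C*|a - b| := by
    intro a b
    have hd : ∀ x ∈ (Set.univ : Set ℝ),
        HasDerivWithinAt (fun t => (deriv g t)^2)
          ((2:ℝ) * deriv g x ^ 1 * deriv (deriv g) x) Set.univ x := fun x _ =>
      (((hg' x).hasDerivAt.pow 2).hasDerivWithinAt).congr_deriv (by norm_num)
    have hb : ∀ x ∈ (Set.univ : Set ℝ),
        ‖(2:ℝ) * deriv g x ^ 1 * deriv (deriv g) x‖ ≤ 2*C := by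
      intro x _
      have := hC x
      rw [Real.norm_eq_abs]
      rw [pow_one, mul_assoc, abs_mul, abs_two]
      nlinarith [abs_nonneg (deriv g x * deriv (deriv g) x)]
    have := convex_univ.norm_image_sub_le_of_norm_hasDerivWithin_le hd hb
      (Set.mem_univ b) (Set.mem_univ a)
    simpa [Real.norm_eq_abs] using this
  -- W has finite second moment
  have hWL2 : MemLp W 2 ℙ := by
    by_contra h
    have h2 := evariance_eq_top hWmeas.aestronglyMeasurable h
    have h3 : variance W ℙ = 0 := by rw [variance, h2]; simp
    rw [hvar] at h3
    nlinarith
  have hW2int : Integrable (fun ω => (W ω)^2) ℙ := hWL2.integrable_sq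
  -- the truncated functions and their primitives
  set h : ℕ → ℝ → ℝ := fun n t => min ((deriv g t)^2) n with hhdef
  have hcont : ∀ n, Continuous (h n) := fun n => cg2.min continuous_const
  have hnn : ∀ n t, 0 ≤ h n t := fun n t => le_min (sq_nonneg _) n.cast_nonneg
  have hle : ∀ n t, h n t ≤ n := fun n t => min_le_right _ _
  set ψ : ℕ → ℝ → ℝ := fun n x => ∫ t in (0:ℝ)..x, h n t with hψdef
  have hψd : ∀ n x, HasDerivAt (ψ n) (h n x) x := fun n x =>
    ((hcont n).integral_hasStrictDerivAt 0 x).hasDerivAt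
  have hψdiff : ∀ n, Differentiable ℝ (ψ n) := fun n x => (hψd n x).differentiableAt
  have hψderiv : ∀ n, deriv (ψ n) = h n := fun n => funext fun x => (hψd n x).deriv
  have hψbound : ∀ n x, |ψ n x| ≤ n * |x| := by
    intro n x
    have := intervalIntegral.norm_integral_le_of_norm_le_const (a := 0) (b := x) (C := (n:ℝ))
      (f := h n) (fun t _ => by
        rw [Real.norm_eq_abs, abs_of_nonneg (hnn n t)]; exact hle n t)
    simpa [Real.norm_eq_abs] using this
  -- rewriting x * ψ n x over Ioc
  have hrepr : ∀ (f : ℝ → ℝ) (x : ℝ), x * ∫ t in (0:ℝ)..x, f t =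
      |x| * ∫ t in Set.Ioc (min 0 x) (max 0 x), f t := by
    intro f x
    rcases le_or_gt 0 x with hx | hx
    · rw [intervalIntegral.integral_of_le hx, abs_of_nonneg hx,
        min_eq_left hx, max_eq_right hx]
    · rw [intervalIntegral.integral_of_ge hx.le, abs_of_neg hx,
        min_eq_right hx.le, max_eq_left hx.le]
      ring
  -- nonnegativity of x * ψ n x
  have hψnn : ∀ n x, 0 ≤ x * ψ n x := by
    intro n x
    rw [hrepr]
    exact mul_nonneg (abs_nonneg x)
      (setIntegral_nonneg measurableSet_Ioc fun t _ => hnn n t)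
  -- monotonicity in n of x * ψ n x
  have hψmono : ∀ x : ℝ, Monotone fun n => x * ψ n x := by
    intro x m n hmn
    simp only
    rw [hrepr, hrepr]
    have him : IntegrableOn (h m) (Set.Ioc (min 0 x) (max 0 x)) := (hcont m).integrableOn_Ioc
    have hin : IntegrableOn (h n) (Set.Ioc (min 0 x) (max 0 x)) := (hcont n).integrableOn_Ioc
    refine mul_le_mul_of_nonneg_left ?_ (abs_nonneg x)
    exact setIntegral_mono him hin fun t => min_le_min le_rfl (Nat.cast_le.2 hmn)
  -- pointwise: (g x - g 0)^2 ≤ x * ψ n x for some n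
  have hkey : ∀ x : ℝ, ∃ n : ℕ, (g x - g 0)^2 ≤ x * ψ n x := by
    intro x
    obtain ⟨M, hM⟩ := (isCompact_uIcc (a := (0:ℝ)) (b := x)).exists_bound_of_continuousOn
      cg2.continuousOn
    refine ⟨⌈M⌉₊, ?_⟩
    have hMn : ∀ t ∈ Set.uIcc (0:ℝ) x, (deriv g t)^2 ≤ (⌈M⌉₊ : ℝ) := by
      intro t ht
      calc (deriv g t)^2 ≤ M := le_trans (le_abs_self _) (by simpa using hM t ht)
        _ ≤ (⌈M⌉₊ : ℝ) := Nat.le_ceil M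
    have heq : ψ ⌈M⌉₊ x = ∫ t in (0:ℝ)..x, (deriv g t)^2 := by
      refine intervalIntegral.integral_congr fun t ht => ?_
      exact min_eq_left (hMn t ht)
    have hftc : ∫ t in (0:ℝ)..x, deriv g t = g x - g 0 :=
      intervalIntegral.integral_deriv_eq_sub (fun t _ => hg t) (cg'.intervalIntegrable 0 x)
    have hIoc : Set.Ioc (min 0 x) (max 0 x) ⊆ Set.uIcc (0:ℝ) x := by
      rw [Set.uIcc]
      exact Set.Ioc_subset_Icc_self
    have hcs := cs_aux (deriv g) cg' (min 0 x) (max 0 x) (min_le_max)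
    have hsq : (g x - g 0)^2 = (∫ t in Set.Ioc (min 0 x) (max 0 x), deriv g t)^2 := by
      rw [← hftc]
      rcases le_or_gt 0 x with hx | hx
      · rw [intervalIntegral.integral_of_le hx, min_eq_left hx, max_eq_right hx]
      · rw [intervalIntegral.integral_of_ge hx.le, min_eq_right hx.le, max_eq_left hx.le,
          neg_pow, neg_one_sq, one_mul]
    have habs : max 0 x - min 0 x = |x| := by
      rcases le_or_gt 0 x with hx | hx
      · rw [min_eq_left hx, max_eq_right hx, abs_of_nonneg hx]; ring
      · rw [min_eq_right hx.le, max_eq_left hx.le, abs_of_neg hx]; ring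
    rw [heq, hrepr, hsq]
    rw [habs] at hcs
    exact hcs
  -- integrability of ω ↦ W ω * ψ n (W ω)
  have hψcont : ∀ n, Continuous (ψ n) := fun n => (hψdiff n).continuous
  have humeas : ∀ n, AEStronglyMeasurable (fun ω => W ω * ψ n (W ω)) ℙ := fun n =>
    (hWmeas.mul ((hψcont n).measurable.comp hWmeas)).aestronglyMeasurable
  have huint : ∀ n, Integrable (fun ω => W ω * ψ n (W ω)) ℙ := by
    intro n
    refine Integrable.mono' (hW2int.const_mul (n:ℝ)) (humeas n)
      (Filter.Eventually.of_forall fun ω => ?_)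
    rw [Real.norm_eq_abs, abs_mul]
    calc |W ω| * |ψ n (W ω)| ≤ |W ω| * ((n:ℝ) * |W ω|) :=
          mul_le_mul_of_nonneg_left (hψbound n (W ω)) (abs_nonneg _)
      _ = (n:ℝ) * (W ω)^2 := by rw [← sq_abs (W ω)]; ring
  -- integrability of h n ∘ Wstar
  have hsint : ∀ n, Integrable (fun ω => h n (Wstar ω)) ℙ := by
    intro n
    refine Integrable.mono' (integrable_const (n:ℝ))
      (((hcont n).measurable.comp hWstarmeas).aestronglyMeasurable)
      (Filter.Eventually.of_forall fun ω => ?_)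
    rw [Real.norm_eq_abs, abs_of_nonneg (hnn n _)]
    exact hle n _
  -- the zero-bias identity
  have hid : ∀ n, ∫ ω, W ω * ψ n (W ω) ∂ℙ = σ^2 * ∫ ω, h n (Wstar ω) ∂ℙ := by
    intro n
    have := hzb (ψ n) (hψdiff n) (huint n) (by rw [hψderiv n]; exact hsint n)
    rw [hψderiv n] at this
    exact this
  -- bound the right-hand side
  have hbound : ∀ n, ∫ ω, h n (Wstar ω) ∂ℙ ≤
      ∫ ω, ((deriv g (W ω))^2 + 2*C*|Wstar ω - W ω|) ∂ℙ := by
    intro n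
    refine integral_mono (hsint n) (hInt₁.add (hInt₂.const_mul (2*C))) fun ω => ?_
    calc h n (Wstar ω) ≤ (deriv g (Wstar ω))^2 := min_le_left _ _
      _ ≤ (deriv g (W ω))^2 + 2*C*|Wstar ω - W ω| := by
          have := lip (Wstar ω) (W ω)
          have h2 := abs_sub_abs_le_abs_sub ((deriv g (Wstar ω))^2) ((deriv g (W ω))^2)
          nlinarith [abs_nonneg ((deriv g (Wstar ω))^2 - (deriv g (W ω))^2),
            le_abs_self ((deriv g (Wstar ω))^2 - (deriv g (W ω))^2)]
  have hsum : ∫ ω, ((deriv g (W ω))^2 + 2*C*|Wstar ω - W ω|) ∂ℙ =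
      (∫ ω, (deriv g (W ω))^2 ∂ℙ) + 2*C*∫ ω, |Wstar ω - W ω| ∂ℙ := by
    rw [integral_add hInt₁ (hInt₂.const_mul (2*C)), integral_const_mul]
  set R : ℝ := σ ^ 2 * ∫ ω, (deriv g (W ω)) ^ 2 ∂ℙ +
      2 * σ ^ 2 * C * ∫ ω, |Wstar ω - W ω| ∂ℙ with hRdef
  have hRn : ∀ n, ∫ ω, W ω * ψ n (W ω) ∂ℙ ≤ R := by
    intro n
    rw [hid n, hRdef]
    have := hbound n
    rw [hsum] at this
    nlinarith [sq_nonneg σ]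
  have hR0 : 0 ≤ R :=
    le_trans (integral_nonneg fun ω => hψnn 0 (W ω)) (hRn 0)
  -- the squared centered integrand
  have hYint : Integrable (fun ω => (g (W ω) - g 0)^2) ℙ :=
    (hgW.sub (memLp_const (g 0))).integrable_sq
  have hYmeas : AEStronglyMeasurable (fun ω => (g (W ω) - g 0)^2) ℙ := hYint.aestronglyMeasurable
  -- main estimate : ∫ (g(W) - g 0)^2 ≤ R
  have hmain : ∫ ω, (g (W ω) - g 0)^2 ∂ℙ ≤ R := by
    rw [integral_eq_lintegral_of_nonneg_ae (Filter.Eventually.of_forall fun ω => sq_nonneg _)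
      hYmeas]
    refine ENNReal.toReal_le_of_le_ofReal hR0 ?_
    calc ∫⁻ ω, ENNReal.ofReal ((g (W ω) - g 0)^2) ∂ℙ
        ≤ ∫⁻ ω, ⨆ n, ENNReal.ofReal (W ω * ψ n (W ω)) ∂ℙ := by
          refine lintegral_mono fun ω => ?_
          obtain ⟨n, hn⟩ := hkey (W ω)
          exact le_iSup_of_le n (ENNReal.ofReal_le_ofReal hn)
      _ = ⨆ n, ∫⁻ ω, ENNReal.ofReal (W ω * ψ n (W ω)) ∂ℙ := by
          refine lintegral_iSup (fun n => ?_) (fun m n hmn ω => ?_)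
          · exact (hWmeas.mul ((hψcont n).measurable.comp hWmeas)).ennreal_ofReal
          · exact ENNReal.ofReal_le_ofReal (hψmono (W ω) hmn)
      _ ≤ ENNReal.ofReal R := by
          refine iSup_le fun n => ?_
          rw [← ofReal_integral_eq_lintegral_ofReal (huint n)
            (Filter.Eventually.of_forall fun ω => hψnn n (W ω))]
          exact ENNReal.ofReal_le_ofReal (hRn n)
  -- variance ≤ ∫ (g(W) - g 0)^2
  have hXint : Integrable (fun ω => g (W ω)) ℙ := hgW.integrable one_le_two
  have hX2int : Integrable (fun ω => (g (W ω))^2) ℙ := hgW.integrable_sq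
  have hvd := variance_eq_sub hgW
  have hexp : ∫ ω, (g (W ω) - g 0)^2 ∂ℙ =
      (∫ ω, (g (W ω))^2 ∂ℙ) - 2 * g 0 * (∫ ω, g (W ω) ∂ℙ) + (g 0)^2 := by
    have : (fun ω => (g (W ω) - g 0)^2) =
        fun ω => ((g (W ω))^2 - 2 * g 0 * g (W ω)) + (g 0)^2 := by
      funext ω; ring
    have hsub : Integrable (fun ω => g (W ω)^2 - 2 * g 0 * g (W ω)) ℙ :=
      hX2int.sub (hXint.const_mul (2 * g 0))
    have hcm : Integrable (fun ω => 2 * g 0 * g (W ω)) ℙ := hXint.const_mul (2 * g 0)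
    rw [this, integral_add hsub (integrable_const _),
      integral_sub hX2int hcm, integral_const_mul, integral_const]
    simp [measure_univ]
  have hvle : variance (fun ω => g (W ω)) ℙ ≤ ∫ ω, (g (W ω) - g 0)^2 ∂ℙ := by
    simp only [Pi.pow_apply] at hvd
    rw [hvd, hexp]
    nlinarith [sq_nonneg ((∫ ω, g (W ω) ∂ℙ) - g 0)]
  exact le_trans hvle hmain
end

section
/- Let W have mean zero and finite variance σ². The W-zero-biased distribution has density p*(w) = (1/σ²) E[W · 1{W > w}] on ℝ; i.e., for all absolutely continuous φ with E|Wφ(W)| < ∞, E[Wφ(W)] = σ² ∫ φ'(w) p*(w) dw. -/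
open MeasureTheory ProbabilityTheory

/-- The zero-biased distribution of `W` (mean 0, variance `σ²`) has density
`p*(w) = σ⁻² E[W · 1{W > w}]`: for all absolutely continuous `φ`,
`E[Wφ(W)] = σ² ∫ φ'(w) p*(w) dw`. -/
theorem stmt15 {Ω : Type*} [MeasureSpace Ω] [IsProbabilityMeasure (ℙ : Measure Ω)]
    (W : Ω → ℝ) (hWmeas : Measurable W)
    (σ : ℝ) (hσ : 0 < σ)
    (hmean : ∫ ω, W ω ∂ℙ = 0) (hvar : variance W ℙ = σ ^ 2)
    (pstar : ℝ → ℝ)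
    (hpstar : pstar = fun w => (1 / σ ^ 2) * ∫ ω, (if w < W ω then W ω else 0) ∂ℙ) :
    ∀ φ : ℝ → ℝ, Differentiable ℝ φ →
      Integrable (fun ω => W ω * φ (W ω)) ℙ →
      Integrable (fun w => deriv φ w * pstar w) volume →
      ∫ ω, W ω * φ (W ω) ∂ℙ = σ ^ 2 * ∫ w, deriv φ w * pstar w := by
  intro φ hφ hint1 hint2
  have hσ2 : (0:ℝ) < σ ^ 2 := by positivity
  -- W is square integrable, hence integrable
  have hW2 : MemLp W 2 ℙ := by
    by_contra h
    have h1 : evariance W ℙ = ⊤ := evariance_eq_top hWmeas.aestronglyMeasurable h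
    have h2 : variance W ℙ = 0 := by
      simp [ProbabilityTheory.variance, h1]
    rw [hvar] at h2; linarith
  have hW1 : Integrable W ℙ := hW2.integrable one_le_two
  -- truncations
  set T : ℝ → Ω → ℝ := fun w ω => if w < W ω then W ω else 0 with hT
  set S : ℝ → Ω → ℝ := fun w ω => if W ω ≤ w then W ω else 0 with hS
  have hTmeas : ∀ w, Measurable (T w) := fun w =>
    Measurable.ite (measurableSet_lt measurable_const hWmeas) hWmeas measurable_const
  have hSmeas : ∀ w, Measurable (S w) := fun w =>
    Measurable.ite (measurableSet_le hWmeas measurable_const) hWmeas measurable_const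
  have hTint : ∀ w, Integrable (T w) ℙ := by
    intro w
    refine hW1.mono (hTmeas w).aestronglyMeasurable (Filter.Eventually.of_forall fun ω => ?_)
    simp only [hT, Real.norm_eq_abs]
    split_ifs <;> simp [abs_nonneg]
  have hSint : ∀ w, Integrable (S w) ℙ := by
    intro w
    refine hW1.mono (hSmeas w).aestronglyMeasurable (Filter.Eventually.of_forall fun ω => ?_)
    simp only [hS, Real.norm_eq_abs]
    split_ifs <;> simp [abs_nonneg]
  have hTS : ∀ w, ∫ ω, T w ω ∂ℙ = - ∫ ω, S w ω ∂ℙ := by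
    intro w
    have hfun : T w = fun ω => W ω - S w ω := by
      funext ω; simp only [hT, hS]
      by_cases h : w < W ω
      · rw [if_pos h, if_neg (not_le.mpr h), sub_zero]
      · rw [if_neg h, if_pos (not_lt.1 h)]; ring
    rw [hfun, integral_sub hW1 (hSint w), hmean]; ring
  -- σ² pstar w = E[T w]
  have hp : ∀ w, σ ^ 2 * pstar w = ∫ ω, T w ω ∂ℙ := by
    intro w; rw [hpstar]; field_simp; rfl
  have hpnonneg : ∀ w, 0 ≤ pstar w := by
    intro w
    have hTnn : 0 ≤ ∫ ω, T w ω ∂ℙ := by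
      rcases le_or_gt 0 w with hw | hw
      · refine integral_nonneg fun ω => ?_
        simp only [hT, Pi.zero_apply]; split_ifs with h <;> linarith
      · rw [hTS w]
        have : ∫ ω, S w ω ∂ℙ ≤ 0 := by
          refine integral_nonpos fun ω => ?_
          simp only [hS, Pi.zero_apply]; split_ifs with h <;> linarith
        linarith
    nlinarith [hp w, hσ2]
  -- the kernel
  set k : Ω → ℝ → ℝ := fun ω w =>
    if 0 < w ∧ w < W ω then W ω else if W ω ≤ w ∧ w ≤ 0 then -W ω else 0 with hk
  have hknn : ∀ ω w, 0 ≤ k ω w := by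
    intro ω w; simp only [hk]
    split_ifs with h1 h2
    · linarith [h1.1, h1.2]
    · linarith [h2.1, h2.2]
    · exact le_refl 0

  have hkabs : ∀ ω w, ‖k ω w‖ ≤ ‖W ω‖ := by
    intro ω w; simp only [hk, Real.norm_eq_abs]
    split_ifs <;> simp [abs_nonneg, abs_neg, le_refl]
  have hkmeas : Measurable (fun p : Ω × ℝ => k p.1 p.2) := by
    apply Measurable.ite
    · exact ((measurableSet_lt measurable_const measurable_snd).inter
        (measurableSet_lt measurable_snd (hWmeas.comp measurable_fst)))
    · exact hWmeas.comp measurable_fst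
    apply Measurable.ite
    · exact ((measurableSet_le (hWmeas.comp measurable_fst) measurable_snd).inter
        (measurableSet_le measurable_snd measurable_const))
    · exact (hWmeas.comp measurable_fst).neg
    · exact measurable_const
  -- E[k(·,w)] = σ² pstar w
  have hkint : ∀ w, Integrable (fun ω => k ω w) ℙ := by
    intro w
    refine hW1.mono ?_ (Filter.Eventually.of_forall fun ω => hkabs ω w)
    exact (hkmeas.comp (measurable_id.prodMk measurable_const)).aestronglyMeasurable
  have hE : ∀ w, ∫ ω, k ω w ∂ℙ = σ ^ 2 * pstar w := by
    intro w
    rcases le_or_gt w 0 with hw | hw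
    · have hfun : (fun ω => k ω w) = fun ω => -(S w ω) := by
        funext ω; simp only [hk, hS]
        have h1 : ¬(0 < w ∧ w < W ω) := fun h => absurd hw (not_le.mpr h.1)
        by_cases h2 : W ω ≤ w
        · rw [if_neg h1, if_pos (⟨h2, hw⟩ : W ω ≤ w ∧ w ≤ 0), if_pos h2]
        · rw [if_neg h1, if_neg (fun h : W ω ≤ w ∧ w ≤ 0 => h2 h.1), if_neg h2, neg_zero]
      rw [hfun, integral_neg, hp w, hTS w]
    · have hfun : (fun ω => k ω w) = T w := by
        funext ω; simp only [hk, hT]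
        have h2 : ¬(W ω ≤ w ∧ w ≤ 0) := fun h => absurd hw (not_lt.mpr h.2)
        by_cases h1 : w < W ω
        · rw [if_pos (⟨hw, h1⟩ : 0 < w ∧ w < W ω), if_pos h1]
        · rw [if_neg (fun h : 0 < w ∧ w < W ω => h1 h.2), if_neg h2, if_neg h1]
      rw [hfun, hp w]
  -- joint integrability
  set f : Ω × ℝ → ℝ := fun p => deriv φ p.2 * k p.1 p.2 with hf
  have hfmeas : AEStronglyMeasurable f (Measure.prod ℙ volume) :=
    (((measurable_deriv φ).comp measurable_snd).mul hkmeas).aestronglyMeasurable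
  have hsec : ∀ w, Integrable (fun ω => f (ω, w)) ℙ := by
    intro w
    have h : Integrable (fun ω => deriv φ w * k ω w) ℙ := by
      refine (hW1.const_mul (deriv φ w)).mono
        ((hkint w).aestronglyMeasurable.const_mul _)
        (Filter.Eventually.of_forall fun ω => ?_)
      simp only [Real.norm_eq_abs, abs_mul]
      have := hkabs ω w
      simp only [Real.norm_eq_abs] at this
      exact mul_le_mul_of_nonneg_left this (abs_nonneg _)
    exact h
  have hnormint : Integrable (fun w => ∫ ω, ‖f (ω, w)‖ ∂ℙ) volume := by
    have heq : ∀ w, ∫ ω, ‖f (ω, w)‖ ∂ℙ = σ ^ 2 * ‖deriv φ w * pstar w‖ := by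
      intro w
      have h1 : (fun ω => ‖f (ω, w)‖) = fun ω => ‖deriv φ w‖ * k ω w := by
        funext ω
        simp only [hf, Real.norm_eq_abs, abs_mul, abs_of_nonneg (hknn ω w)]
      rw [h1, integral_const_mul, hE w, Real.norm_eq_abs, Real.norm_eq_abs, abs_mul,
        abs_of_nonneg (hpnonneg w)]
      ring
    exact ((hint2.norm.const_mul (σ ^ 2)).congr
      (Filter.Eventually.of_forall fun w => (heq w).symm))
  have hprod : Integrable f (Measure.prod ℙ volume) := by
    rw [integrable_prod_iff' hfmeas]
    exact ⟨Filter.Eventually.of_forall hsec, hnormint⟩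
  -- pointwise FTC identity
  have hpoint : ∀ ω, Integrable (fun w => f (ω, w)) volume →
      ∫ w, deriv φ w * k ω w = W ω * (φ (W ω) - φ 0) := by
    intro ω hι
    set c := W ω with hc
    rcases lt_trichotomy c 0 with hcneg | hczero | hcpos
    · -- c < 0
      have hIoo : IntegrableOn (deriv φ) (Set.Ioo c 0) volume := by
        have h1 : IntegrableOn (fun w => f (ω, w)) (Set.Ioo c 0) volume := hι.integrableOn
        have h2 : IntegrableOn (fun w => deriv φ w * (-c)) (Set.Ioo c 0) volume := by
          refine h1.congr_fun ?_ measurableSet_Ioo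
          intro w hw
          simp only [hf, hk, ← hc]
          rw [if_neg (by push_neg; intro h; linarith [hw.2]), if_pos ⟨le_of_lt hw.1, le_of_lt hw.2⟩]
        have h3 : IntegrableOn (fun x => deriv φ x * -c * (-c)⁻¹) (Set.Ioo c 0) volume :=
          h2.mul_const (-c)⁻¹
        refine h3.congr_fun (fun w _ => ?_) measurableSet_Ioo
        beta_reduce; rw [mul_assoc, mul_inv_cancel₀ (neg_ne_zero.mpr (ne_of_lt hcneg)), mul_one]
      have hii : IntervalIntegrable (deriv φ) volume 0 c := by
        rw [intervalIntegrable_iff, Set.uIoc_comm, Set.uIoc_of_le (le_of_lt hcneg)]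
        exact hIoo.congr_set_ae Ioo_ae_eq_Ioc.symm
      have hftc : ∫ w in c..(0:ℝ), deriv φ w = φ 0 - φ c :=
        intervalIntegral.integral_deriv_eq_sub (fun x _ => hφ x) hii.symm
      have hind : (fun w => deriv φ w * k ω w) =
          (Set.Icc c 0).indicator (fun w => deriv φ w * (-c)) := by
        funext w
        rcases Classical.em (w ∈ Set.Icc c 0) with hw | hw
        · rw [Set.indicator_of_mem hw]
          simp only [hk, ← hc]
          rw [if_neg (by push_neg; intro h; linarith [hw.2]), if_pos ⟨hw.1, hw.2⟩]
        · rw [Set.indicator_of_notMem hw]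
          simp only [Set.mem_Icc, not_and_or, not_le] at hw
          simp only [hk, ← hc]
          rcases hw with hw | hw
          · rw [if_neg (by push_neg; intro h; linarith), if_neg (by push_neg; intro h; linarith)]
            ring
          · rw [if_neg (by push_neg; intro h; linarith), if_neg (by push_neg; intro h; linarith)]
            ring
      rw [hind, integral_indicator measurableSet_Icc,
        setIntegral_congr_set Ioc_ae_eq_Icc.symm, integral_mul_const,
        ← intervalIntegral.integral_of_le (le_of_lt hcneg), hftc]
      ring
    · -- c = 0
      have : (fun w => deriv φ w * k ω w) = fun _ => 0 := by
        funext w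
        simp only [hk, ← hc, hczero]
        split_ifs with h1 h2
        · exact absurd (lt_trans h1.1 h1.2) (lt_irrefl 0)
        · ring
        · ring
      rw [this, integral_zero, hczero]; ring
    · -- 0 < c
      have hIoo : IntegrableOn (deriv φ) (Set.Ioo 0 c) volume := by
        have h1 : IntegrableOn (fun w => f (ω, w)) (Set.Ioo 0 c) volume := hι.integrableOn
        have h2 : IntegrableOn (fun w => deriv φ w * c) (Set.Ioo 0 c) volume := by
          refine h1.congr_fun ?_ measurableSet_Ioo
          intro w hw
          simp only [hf, hk, ← hc]
          rw [if_pos ⟨hw.1, hw.2⟩]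
        have h3 : IntegrableOn (fun x => deriv φ x * c * c⁻¹) (Set.Ioo 0 c) volume :=
          h2.mul_const c⁻¹
        refine h3.congr_fun (fun w _ => ?_) measurableSet_Ioo
        beta_reduce; rw [mul_assoc, mul_inv_cancel₀ (ne_of_gt hcpos), mul_one]
      have hii : IntervalIntegrable (deriv φ) volume 0 c := by
        rw [intervalIntegrable_iff, Set.uIoc_of_le (le_of_lt hcpos)]
        exact hIoo.congr_set_ae Ioo_ae_eq_Ioc.symm
      have hftc : ∫ w in (0:ℝ)..c, deriv φ w = φ c - φ 0 :=
        intervalIntegral.integral_deriv_eq_sub (fun x _ => hφ x) hii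
      have hind : (fun w => deriv φ w * k ω w) =
          (Set.Ioo 0 c).indicator (fun w => deriv φ w * c) := by
        funext w
        rcases Classical.em (w ∈ Set.Ioo 0 c) with hw | hw
        · rw [Set.indicator_of_mem hw]
          simp only [hk, ← hc]
          rw [if_pos ⟨hw.1, hw.2⟩]
        · rw [Set.indicator_of_notMem hw]
          simp only [Set.mem_Ioo, not_and_or, not_lt] at hw
          simp only [hk, ← hc]
          rcases hw with hw | hw
          · rw [if_neg (by push_neg; intro h; linarith), if_neg (by push_neg; intro h; linarith)]
            ring
          · rw [if_neg (by push_neg; intro h; linarith), if_neg (by push_neg; intro h; linarith)]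
            ring
      rw [hind, integral_indicator measurableSet_Ioo,
        setIntegral_congr_set Ioo_ae_eq_Ioc, integral_mul_const,
        ← intervalIntegral.integral_of_le (le_of_lt hcpos), hftc]
      ring
  -- put it together
  have h1 : ∫ ω, W ω * φ (W ω) ∂ℙ = ∫ ω, W ω * (φ (W ω) - φ 0) ∂ℙ := by
    have hrw : (fun ω => W ω * (φ (W ω) - φ 0)) = fun ω => W ω * φ (W ω) - φ 0 * W ω := by
      funext ω; ring
    rw [hrw, integral_sub hint1 (hW1.const_mul (φ 0)), integral_const_mul, hmean]
    ring
  have h2 : ∫ ω, W ω * (φ (W ω) - φ 0) ∂ℙ = ∫ ω, ∫ w, deriv φ w * k ω w ∂volume ∂ℙ := by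
    refine integral_congr_ae ?_
    filter_upwards [hprod.prod_right_ae] with ω hι
    exact (hpoint ω hι).symm
  have h3 : ∫ ω, ∫ w, deriv φ w * k ω w ∂volume ∂ℙ =
      ∫ w, ∫ ω, deriv φ w * k ω w ∂ℙ ∂volume :=
    integral_integral_swap (f := fun ω w => deriv φ w * k ω w) hprod
  have h4 : ∫ w, ∫ ω, deriv φ w * k ω w ∂ℙ ∂volume = σ ^ 2 * ∫ w, deriv φ w * pstar w := by
    have hrw : (fun w => ∫ ω, deriv φ w * k ω w ∂ℙ) =
        fun w => σ ^ 2 * (deriv φ w * pstar w) := by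
      funext w
      rw [integral_const_mul, hE w]
      ring
    rw [hrw, integral_const_mul]
  rw [h1, h2, h3, h4]
end
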